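/- Let 𝔄 be a fully interpreted τ-structure, X ⊆ A, and φ ∈ MSO(τ). If 𝒢 ≅ reduce(EMC(𝔄, X, φ)), then eval(MC(𝔄, φ)) = eval(convert(𝒢)). -/

import Mathlib

namespace MSOG

attribute [local instance] Classical.propDecidable

/-! ### Players and vocabularies -/

inductive Player where
  | falsifier
  | verifier
deriving DecidableEq

/-- A vocabulary: a finite set of relation symbol names and nullary symbol names.
Symbols are drawn from `ℕ`; the arity of relation symbols is given by a global
arity function `ar : ℕ → ℕ`. -/
structure Vocab where
  rels : Finset ℕ
  nulls : Finset ℕ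

def Vocab.addRel (τ : Vocab) (R : ℕ) : Vocab := ⟨insert R τ.rels, τ.nulls⟩

def Vocab.addNul (τ : Vocab) (c : ℕ) : Vocab := ⟨τ.rels, insert c τ.nulls⟩

/-! ### Structures -/

/-- A (partially interpreted) structure: a finite universe of objects (⊆ ℕ),
an interpretation of each relation symbol as a set of tuples (lists), and a
partial interpretation of nullary symbols (`none` = nil/uninterpreted). -/
structure Struc where
  voc : Vocab
  univ : Finset ℕ
  rel : ℕ → List ℕ → Prop
  nul : ℕ → Option ℕ

/-- Wellformedness of a structure w.r.t. the arity function: relations only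
interpret relation symbols of the vocabulary by tuples of the right length over
the universe, and nullary symbols of the vocabulary by universe elements. -/
structure Struc.WF (ar : ℕ → ℕ) (A : Struc) : Prop where
  rel_wf : ∀ R t, A.rel R t → R ∈ A.voc.rels ∧ t.length = ar R ∧ ∀ x ∈ t, x ∈ A.univ
  nul_wf : ∀ c x, A.nul c = some x → c ∈ A.voc.nulls ∧ x ∈ A.univ

def Struc.FullyInterpreted (A : Struc) : Prop := ∀ c ∈ A.voc.nulls, (A.nul c).isSome

/-- The set `c̄^𝔄` of values of the interpreted nullary symbols. -/
def Struc.nulValues (A : Struc) : Finset ℕ :=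
  A.voc.nulls.biUnion fun c => (A.nul c).toFinset

/-- Induced substructure `𝔄[s]`. -/
def Struc.restrict (A : Struc) (s : Finset ℕ) : Struc where
  voc := A.voc
  univ := A.univ ∩ s
  rel := fun R t => A.rel R t ∧ ∀ x ∈ t, x ∈ s
  nul := fun c =>
    match A.nul c with
    | some x => if x ∈ s then some x else none
    | none => none

/-- Expansion `(𝔄, u)` interpreting the nullary symbol `c` as `u` (possibly nil). -/
def Struc.addNul (A : Struc) (c : ℕ) (u : Option ℕ) : Struc where
  voc := A.voc.addNul c
  univ := A.univ
  rel := A.rel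
  nul := fun d => if d = c then u else A.nul d

/-- Expansion `(𝔄, U)` interpreting the unary relation symbol `R` as `U ⊆ A`. -/
def Struc.addRel (A : Struc) (R : ℕ) (U : Finset ℕ) : Struc where
  voc := A.voc.addRel R
  univ := A.univ
  rel := fun S t => if S = R then ∃ x ∈ U, t = [x] else A.rel S t
  nul := A.nul

/-- Expansion `(𝔄, U₁, …, U_l)` interpreting each unary relation symbol `R ∈ Rs`
as `U R ⊆ A`. -/
def Struc.addRels (A : Struc) (Rs : Finset ℕ) (U : ℕ → Finset ℕ) : Struc where
  voc := ⟨A.voc.rels ∪ Rs, A.voc.nulls⟩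
  univ := A.univ
  rel := fun S t => if S ∈ Rs then ∃ x ∈ U S, t = [x] else A.rel S t
  nul := A.nul

/-- `h` is an isomorphism from `A` to `B`. -/
structure Iso (A B : Struc) (h : ℕ → ℕ) : Prop where
  voc_eq : A.voc = B.voc
  bij : Set.BijOn h ↑A.univ ↑B.univ
  interp_iff : ∀ c ∈ A.voc.nulls, ((A.nul c).isSome ↔ (B.nul c).isSome)
  nul_map : ∀ c ∈ A.voc.nulls, ∀ x, A.nul c = some x → B.nul c = some (h x)
  rel_map : ∀ R ∈ A.voc.rels, ∀ t : List ℕ, (∀ x ∈ t, x ∈ A.univ) →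
    (A.rel R t ↔ B.rel R (t.map h))

/-- Two structures are compatible: interpreted nullary symbols agree, and the
identity is an isomorphism between the substructures induced by the common part
of the universes. -/
def Compatible (A B : Struc) : Prop :=
  A.voc = B.voc ∧
  (∀ c x y, A.nul c = some x → B.nul c = some y → x = y) ∧
  Iso (A.restrict (A.univ ∩ B.univ)) (B.restrict (A.univ ∩ B.univ)) id

/-- Union of two (compatible) structures. -/
def Struc.union (A B : Struc) : Struc where
  voc := A.voc
  univ := A.univ ∪ B.univ
  rel := fun R t => A.rel R t ∨ B.rel R t
  nul := fun c =>
    match A.nul c with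
    | some x => some x
    | none => B.nul c

/-! ### MSO formulas -/

/-- MSO formulas in negation normal form. -/
inductive MSO where
  | atom (R : ℕ) (cs : List ℕ)
  | natom (R : ℕ) (cs : List ℕ)
  | conj (φ ψ : MSO)
  | disj (φ ψ : MSO)
  | fall (c : ℕ) (φ : MSO)
  | fex (c : ℕ) (φ : MSO)
  | sall (R : ℕ) (φ : MSO)
  | sex (R : ℕ) (φ : MSO)
deriving DecidableEq

/-- `MSO.wf ar τ φ` means `φ ∈ MSO(τ)` (w.r.t. the arity function `ar`,
quantified symbols being fresh unary relation resp. nullary symbols). -/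
def MSO.wf (ar : ℕ → ℕ) : Vocab → MSO → Prop
  | τ, .atom R cs => R ∈ τ.rels ∧ cs.length = ar R ∧ ∀ c ∈ cs, c ∈ τ.nulls
  | τ, .natom R cs => R ∈ τ.rels ∧ cs.length = ar R ∧ ∀ c ∈ cs, c ∈ τ.nulls
  | τ, .conj φ ψ => MSO.wf ar τ φ ∧ MSO.wf ar τ ψ
  | τ, .disj φ ψ => MSO.wf ar τ φ ∧ MSO.wf ar τ ψ
  | τ, .fall c φ => c ∉ τ.nulls ∧ MSO.wf ar (τ.addNul c) φ
  | τ, .fex c φ => c ∉ τ.nulls ∧ MSO.wf ar (τ.addNul c) φ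
  | τ, .sall R φ => R ∉ τ.rels ∧ ar R = 1 ∧ MSO.wf ar (τ.addRel R) φ
  | τ, .sex R φ => R ∉ τ.rels ∧ ar R = 1 ∧ MSO.wf ar (τ.addRel R) φ

/-- Quantifier rank. -/
def MSO.qr : MSO → ℕ
  | .atom _ _ => 0
  | .natom _ _ => 0
  | .conj φ ψ => max φ.qr ψ.qr
  | .disj φ ψ => max φ.qr ψ.qr
  | .fall _ φ => φ.qr + 1
  | .fex _ φ => φ.qr + 1
  | .sall _ φ => φ.qr + 1
  | .sex _ φ => φ.qr + 1

/-- Length `‖φ‖` of (an encoding of) the formula. -/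
def MSO.len : MSO → ℕ
  | .atom _ cs => 1 + cs.length
  | .natom _ cs => 1 + cs.length
  | .conj φ ψ => 1 + φ.len + ψ.len
  | .disj φ ψ => 1 + φ.len + ψ.len
  | .fall _ φ => 1 + φ.len
  | .fex _ φ => 1 + φ.len
  | .sall _ φ => 1 + φ.len
  | .sex _ φ => 1 + φ.len

def MSO.IsAtomic : MSO → Prop
  | .atom _ _ | .natom _ _ => True
  | _ => False

def MSO.IsUniversal : MSO → Prop
  | .conj _ _ | .fall _ _ | .sall _ _ => True
  | _ => False

def MSO.IsExistential : MSO → Prop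
  | .disj _ _ | .fex _ _ | .sex _ _ => True
  | _ => False

/-- Classical (Tarskian) satisfaction `𝔄 ⊨ φ`. -/
def Sat : Struc → MSO → Prop
  | A, .atom R cs => ∃ t, cs.mapM A.nul = some t ∧ A.rel R t
  | A, .natom R cs => ∃ t, cs.mapM A.nul = some t ∧ ¬ A.rel R t
  | A, .conj φ ψ => Sat A φ ∧ Sat A ψ
  | A, .disj φ ψ => Sat A φ ∨ Sat A ψ
  | A, .fall c φ => ∀ a ∈ A.univ, Sat (A.addNul c (some a)) φ
  | A, .fex c φ => ∃ a ∈ A.univ, Sat (A.addNul c (some a)) φ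
  | A, .sall R φ => ∀ U ⊆ A.univ, Sat (A.addRel R U) φ
  | A, .sex R φ => ∃ U ⊆ A.univ, Sat (A.addRel R U) φ

/-! ### Games -/

/-- A game, presented as its unfolding: either one of the two fixed games
`⊤` (the verifier has a winning strategy) or `⊥` (the falsifier has a winning
strategy), or an initial position together with the player (if any) this
position is assigned to and the list of subgames reachable by the moves. -/
inductive Game (P : Type) where
  | top
  | bot
  | node (pos : P) (owner : Option Player) (subs : List (Game P))

theorem Game.sizeOf_lt_node {P : Type} [SizeOf P] {p : P} {o : Option Player}
    {s : List (Game P)} {g : Game P} (h : g ∈ s) :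
    sizeOf g < sizeOf (Game.node p o s) := by
  have := List.sizeOf_lt_of_mem h
  simp only [Game.node.sizeOf_spec]
  omega

/-- The evaluation algorithm: returns `⊤` if the verifier has a winning
strategy, `⊥` if the falsifier has one, and otherwise the unfolded game
recording the drawn plays. -/
noncomputable def Game.eval {P : Type} : Game P → Game P
  | .top => .top
  | .bot => .bot
  | .node p o subs =>
    let es := subs.attach.map fun g => Game.eval g.1
    match o with
    | some .falsifier =>
      if ∀ g ∈ es, g = Game.top then Game.top
      else if Game.bot ∈ es then Game.bot
      else Game.node p o es
    | some .verifier =>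
      if ∀ g ∈ es, g = Game.bot then Game.bot
      else if Game.top ∈ es then Game.top
      else Game.node p o es
    | none => Game.node p o es
termination_by g => sizeOf g
decreasing_by
  exact Game.sizeOf_lt_node g.2

/-- Equivalence of games, relative to an equivalence `pe` on positions:
the initial positions are equivalent (with equal assignment to players) and
there is a bijection `e` between the sets of subgames such that each subgame is
equivalent to its image. -/
def GEquiv {P : Type} (pe : P → P → Prop) : Game P → Game P → Prop
  | .top, .top => True
  | .bot, .bot => True
  | .node p o s, .node q o' t =>
    pe p q ∧ o = o' ∧
    ∃ e : {g // g ∈ s} ≃ {g // g ∈ t}, ∀ g : {g // g ∈ s}, GEquiv pe g.1 (e g).1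
  | _, _ => False
termination_by g _ => sizeOf g
decreasing_by
  exact Game.sizeOf_lt_node g.2

/-- Number of positions of a game. -/
def Game.size {P : Type} : Game P → ℕ
  | .top => 1
  | .bot => 1
  | .node _ _ subs => 1 + (subs.attach.map fun g => Game.size g.1).sum
termination_by g => sizeOf g
decreasing_by
  exact Game.sizeOf_lt_node g.2

/-! ### Model checking games -/

/-- Positions of extended model checking games: a structure, the current set
`X`, and a formula. -/
abbrev EPos : Type := Struc × Finset ℕ × MSO

/-- Positions of classical model checking games. -/
abbrev CPos : Type := Struc × MSO

/-- Equivalence of positions: same `X ⊆ H₁ ∩ H₂`, same formula, and an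
isomorphism between the structures fixing `X` pointwise. -/
def PosEquivE (p q : EPos) : Prop :=
  p.2.1 = q.2.1 ∧ p.2.2 = q.2.2 ∧
  p.2.1 ⊆ p.1.univ ∧ p.2.1 ⊆ q.1.univ ∧
  ∃ h : ℕ → ℕ, Iso p.1 q.1 h ∧ ∀ a ∈ p.2.1, h a = a

/-- Equivalence `≅` of extended model checking games. -/
def GEquivE : Game EPos → Game EPos → Prop := GEquiv PosEquivE

/-- The extended model checking game `EMC(𝔄, X, φ)` (argument order:
formula, structure, set). -/
noncomputable def EMC : MSO → Struc → Finset ℕ → Game EPos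
  | .atom R cs, A, X =>
    Game.node (A.restrict (X ∪ A.nulValues), X, .atom R cs)
      (if ∀ c ∈ cs, (A.nul c).isSome then
        (if Sat A (.atom R cs) then some .falsifier else some .verifier)
       else none) []
  | .natom R cs, A, X =>
    Game.node (A.restrict (X ∪ A.nulValues), X, .natom R cs)
      (if ∀ c ∈ cs, (A.nul c).isSome then
        (if Sat A (.natom R cs) then some .falsifier else some .verifier)
       else none) []
  | .conj φ ψ, A, X =>
    Game.node (A.restrict (X ∪ A.nulValues), X, .conj φ ψ) (some .falsifier)
      [EMC φ A X, EMC ψ A X]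
  | .disj φ ψ, A, X =>
    Game.node (A.restrict (X ∪ A.nulValues), X, .disj φ ψ) (some .verifier)
      [EMC φ A X, EMC ψ A X]
  | .fall c φ, A, X =>
    Game.node (A.restrict (X ∪ A.nulValues), X, .fall c φ) (some .falsifier)
      ((none :: A.univ.toList.map some).map fun u => EMC φ (A.addNul c u) X)
  | .fex c φ, A, X =>
    Game.node (A.restrict (X ∪ A.nulValues), X, .fex c φ) (some .verifier)
      ((none :: A.univ.toList.map some).map fun u => EMC φ (A.addNul c u) X)
  | .sall R φ, A, X =>
    Game.node (A.restrict (X ∪ A.nulValues), X, .sall R φ) (some .falsifier)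
      (A.univ.powerset.toList.map fun U => EMC φ (A.addRel R U) X)
  | .sex R φ, A, X =>
    Game.node (A.restrict (X ∪ A.nulValues), X, .sex R φ) (some .verifier)
      (A.univ.powerset.toList.map fun U => EMC φ (A.addRel R U) X)

/-- The classical model checking game `MC(𝔄, φ)` (argument order:
formula, structure); object quantifiers move only to elements of the universe
(no nil moves). -/
noncomputable def MC : MSO → Struc → Game CPos
  | .atom R cs, A =>
    Game.node (A.restrict A.nulValues, .atom R cs)
      (if Sat A (.atom R cs) then some .falsifier else some .verifier) []
  | .natom R cs, A =>
    Game.node (A.restrict A.nulValues, .natom R cs)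
      (if Sat A (.natom R cs) then some .falsifier else some .verifier) []
  | .conj φ ψ, A =>
    Game.node (A.restrict A.nulValues, .conj φ ψ) (some .falsifier)
      [MC φ A, MC ψ A]
  | .disj φ ψ, A =>
    Game.node (A.restrict A.nulValues, .disj φ ψ) (some .verifier)
      [MC φ A, MC ψ A]
  | .fall c φ, A =>
    Game.node (A.restrict A.nulValues, .fall c φ) (some .falsifier)
      (A.univ.toList.map fun a => MC φ (A.addNul c (some a)))
  | .fex c φ, A =>
    Game.node (A.restrict A.nulValues, .fex c φ) (some .verifier)
      (A.univ.toList.map fun a => MC φ (A.addNul c (some a)))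
  | .sall R φ, A =>
    Game.node (A.restrict A.nulValues, .sall R φ) (some .falsifier)
      (A.univ.powerset.toList.map fun U => MC φ (A.addRel R U))
  | .sex R φ, A =>
    Game.node (A.restrict A.nulValues, .sex R φ) (some .verifier)
      (A.univ.powerset.toList.map fun U => MC φ (A.addRel R U))

/-! ### The algorithms reduce, convert, forget, combine -/

/-- Remove subgames that are equivalent (`≅`) to an already kept one. -/
noncomputable def dedupEquiv : List (Game EPos) → List (Game EPos)
  | [] => []
  | g :: gs =>
    let r := dedupEquiv gs
    if ∃ g' ∈ r, GEquivE g g' then r else g :: r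

/-- The algorithm `reduce`. -/
noncomputable def reduce : Game EPos → Game EPos
  | .top => .top
  | .bot => .bot
  | .node p o subs =>
    if p.2.2.IsAtomic then Game.eval (Game.node p o subs)
    else
      let rs := subs.attach.map fun g => reduce g.1
      if p.2.2.IsUniversal ∧ Game.bot ∈ rs then Game.bot
      else if p.2.2.IsExistential ∧ Game.top ∈ rs then Game.top
      else
        let kept := dedupEquiv (rs.filter fun g => decide (g ≠ Game.top ∧ g ≠ Game.bot))
        if kept = [] then Game.eval (Game.node p o ([] : List (Game EPos)))
        else Game.node p o kept
termination_by g => sizeOf g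
decreasing_by
  exact Game.sizeOf_lt_node g.2

/-- Whether a game is a node whose position's structure is fully interpreted. -/
def Game.IsFullNodeE : Game EPos → Prop
  | .node q _ _ => q.1.FullyInterpreted
  | _ => False

/-- The algorithm `convert`, turning an extended model checking game into a
classical model checking game by keeping exactly the subgames whose position's
structure is fully interpreted. -/
noncomputable def convert : Game EPos → Game CPos
  | .top => .top
  | .bot => .bot
  | .node p o subs =>
    Game.node (p.1.restrict p.1.nulValues, p.2.2) o
      (subs.attach.filterMap fun g =>
        if g.1.IsFullNodeE then some (convert g.1) else none)
termination_by g => sizeOf g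
decreasing_by
  exact Game.sizeOf_lt_node g.2

/-- The algorithm `forget(𝒢, x)`. -/
noncomputable def forget : Game EPos → ℕ → Game EPos
  | .top, _ => .top
  | .bot, _ => .bot
  | .node p o subs, x =>
    let H := p.1
    let p' : EPos :=
      if ∃ c ∈ H.voc.nulls, H.nul c = some x then (H, p.2.1.erase x, p.2.2)
      else (H.restrict (H.univ.erase x), p.2.1.erase x, p.2.2)
    reduce (Game.node p' o (subs.attach.map fun g => forget g.1 x))
termination_by g _ => sizeOf g
decreasing_by
  exact Game.sizeOf_lt_node g.2

/-- A pair of subgames that `combine` recurses on: both are nodes with the same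
principal subformula and compatible structures. -/
def PairOk : Game EPos → Game EPos → Prop
  | .node p _ _, .node q _ _ => p.2.2 = q.2.2 ∧ Compatible p.1 q.1
  | _, _ => False

/-- The algorithm `combine(𝒢₁, 𝒢₂)`. -/
noncomputable def combine : Game EPos → Game EPos → Game EPos
  | .node p1 o1 s1, .node p2 _ s2 =>
    reduce (Game.node (p1.1.union p2.1, p1.2.1 ∪ p2.2.1, p1.2.2) o1
      ((s1.attach.flatMap fun g1 => s2.attach.map fun g2 => (g1, g2)).filterMap
        fun gg => if PairOk gg.1.1 gg.2.1 then some (combine gg.1.1 gg.2.1) else none))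
  | g, _ => g
termination_by g1 g2 => sizeOf g1 + sizeOf g2
decreasing_by
  have h1 := List.sizeOf_lt_of_mem gg.1.2
  have h2 := List.sizeOf_lt_of_mem gg.2.2
  simp only [Game.node.sizeOf_spec]
  omega

/-! ### Iterated exponentials and minima -/

/-- `iterexp t x = exp^t(x)`, the `t`-fold iterated exponential. -/
def iterexp : ℕ → ℕ → ℕ
  | 0, x => x
  | t + 1, x => 2 ^ iterexp t x

/-- `r` is the minimum of the set `V ⊆ ℤ`, in `WithTop ℤ` (with `min ∅ = ⊤`). -/
def IsMinZ (r : WithTop ℤ) (V : Set ℤ) : Prop :=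
  (∀ v ∈ V, r ≤ (v : WithTop ℤ)) ∧ (V = ∅ → r = ⊤) ∧
  (V.Nonempty → ∃ v ∈ V, r = (v : WithTop ℤ))

/-- `r` is the minimum of the set `V ⊆ WithTop ℤ` (with `min ∅ = ⊤`). -/
def IsMinW (r : WithTop ℤ) (V : Set (WithTop ℤ)) : Prop :=
  (∀ v ∈ V, r ≤ v) ∧ (V = ∅ → r = ⊤) ∧ (V.Nonempty → r ∈ V)

/-! ### Tree decompositions -/

/-- Rooted trees with bags at the nodes. -/
inductive RTree where
  | node (bag : Finset ℕ) (children : List RTree)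

theorem RTree.sizeOf_lt_node {b : Finset ℕ} {cs : List RTree} {c : RTree}
    (h : c ∈ cs) : sizeOf c < sizeOf (RTree.node b cs) := by
  have := List.sizeOf_lt_of_mem h
  simp only [RTree.node.sizeOf_spec]
  omega

def RTree.bag : RTree → Finset ℕ
  | .node b _ => b

/-- The subtree at an address (a node of the tree is identified with the list
of child indices leading to it from the root). -/
def RTree.subtreeAt : RTree → List ℕ → Option RTree
  | t, [] => some t
  | .node _ cs, i :: is =>
    match cs[i]? with
    | some c => c.subtreeAt is
    | none => none

/-- The bag at an address. -/
def RTree.bagAt (t : RTree) (p : List ℕ) : Option (Finset ℕ) :=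
  (t.subtreeAt p).map RTree.bag

/-- All objects occurring in bags of the tree (`Aᵢ` for the subtree at `i`). -/
def RTree.allObjs : RTree → Finset ℕ
  | .node b cs => b ∪ (cs.attach.map fun c => RTree.allObjs c.1).foldr (· ∪ ·) ∅
termination_by t => sizeOf t
decreasing_by
  exact RTree.sizeOf_lt_node c.2

/-- The number of nodes `|T|` of the tree. -/
def RTree.count : RTree → ℕ
  | .node _ cs => 1 + (cs.attach.map fun c => RTree.count c.1).sum
termination_by t => sizeOf t
decreasing_by
  exact RTree.sizeOf_lt_node c.2

/-- Longest common prefix of two addresses. -/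
def lcp : List ℕ → List ℕ → List ℕ
  | a :: as, b :: bs => if a = b then a :: lcp as bs else []
  | _, _ => []

/-- `(𝒯, 𝒳)` (coded as a single bag-labelled rooted tree) is a tree
decomposition of the relational structure `A`: bags are subsets of the universe
covering it, every tuple of every relation is contained in some bag, and if `r`
lies on the path between `p` and `q` then `X_p ∩ X_q ⊆ X_r`. -/
structure IsTreeDecomp (A : Struc) (t : RTree) : Prop where
  bags_sub : ∀ p b, t.bagAt p = some b → b ⊆ A.univ
  covers : ∀ a ∈ A.univ, ∃ p b, t.bagAt p = some b ∧ a ∈ b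
  rel_covers : ∀ R tup, A.rel R tup → ∃ p b, t.bagAt p = some b ∧ ∀ x ∈ tup, x ∈ b
  connected : ∀ p q r bp bq br, t.bagAt p = some bp → t.bagAt q = some bq →
    t.bagAt r = some br → lcp p q <+: r → (r <+: p ∨ r <+: q) → bp ∩ bq ⊆ br

/-- The width of the tree decomposition is at most `w`: every bag has at most
`w + 1` elements. -/
def TDWidthLE (t : RTree) (w : ℕ) : Prop :=
  ∀ p b, t.bagAt p = some b → b.card ≤ w + 1

/-- A node of a nice tree decomposition is a leaf (singleton bag), an introduce
node, a forget node, or a join node. -/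
def RTree.NiceStep : RTree → Prop
  | .node b [] => ∃ x, b = {x}
  | .node b [c] =>
      (∃ x, x ∉ c.allObjs ∧ b = insert x c.bag) ∨ (∃ x ∈ c.bag, b = c.bag.erase x)
  | .node b [c₁, c₂] => b = c₁.bag ∧ b = c₂.bag
  | .node _ _ => False

/-- A nice tree decomposition: every node is a leaf, introduce, forget, or join
node. -/
def RTree.Nice (t : RTree) : Prop := ∀ p s, t.subtreeAt p = some s → s.NiceStep

/-! ### The dynamic programming algorithm -/

/-- `ValidAssign Rbar X U`: `U` is an assignment `(U₁, …, U_l)` of subsets of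
`X` to the free unary relation symbols in `Rbar` (normalized to `∅` outside
`Rbar`). -/
def ValidAssign (Rbar X : Finset ℕ) (U : ℕ → Finset ℕ) : Prop :=
  (∀ R ∈ Rbar, U R ⊆ X) ∧ ∀ R ∉ Rbar, U R = ∅

/-- `W` matches `U` on the bag `Xi` (componentwise). -/
def Matches (Rbar Xi : Finset ℕ) (W U : ℕ → Finset ℕ) : Prop :=
  ∀ R ∈ Rbar, W R ∩ Xi = U R

/-- The reduced extended model checking game of the `τ`-expansion of `B`
by the assignment `W`. -/
noncomputable def RED (φ : MSO) (Rbar : Finset ℕ) (B : Struc) (Xi : Finset ℕ)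
    (W : ℕ → Finset ℕ) : Game EPos :=
  reduce (EMC φ (B.addRels Rbar W) Xi)

/-- The value `valᵢ(ℛ)` should be the minimum of `Σ αₖ |R_k^{𝔄ᵢ'} ∖ Xᵢ|` over
the matching expansions equivalent to `ℛ`; this is the summand for one `W`. -/
def cost (α : ℕ → ℤ) (Rbar : Finset ℕ) (X : Finset ℕ) (W : ℕ → Finset ℕ) : ℤ :=
  ∑ R ∈ Rbar, α R * (((W R) \ X).card : ℤ)

/-- Invariant 12 at a node with substructure `Ai` and bag `Xi`, for the
table `S` and values `val`. -/
def Invariant (φ : MSO) (α : ℕ → ℤ) (Rbar : Finset ℕ) (Ai : Struc) (Xi : Finset ℕ)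
    (S : (ℕ → Finset ℕ) → Set (Game EPos)) (val : Game EPos → WithTop ℤ) : Prop :=
  ∀ U, ValidAssign Rbar Xi U →
    ((∀ W, ValidAssign Rbar Ai.univ W → Matches Rbar Xi W U →
        RED φ Rbar Ai Xi W ≠ Game.bot →
        ∃! G, G ∈ S U ∧ GEquivE G (RED φ Rbar Ai Xi W)) ∧
     (∀ G ∈ S U, G ≠ Game.bot ∧
        ∃ W, ValidAssign Rbar Ai.univ W ∧ Matches Rbar Xi W U ∧
          GEquivE (RED φ Rbar Ai Xi W) G) ∧
     (∀ G ∈ S U, IsMinZ (val G)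
        {v : ℤ | ∃ W, ValidAssign Rbar Ai.univ W ∧ Matches Rbar Xi W U ∧
           GEquivE (RED φ Rbar Ai Xi W) G ∧ RED φ Rbar Ai Xi W ≠ Game.bot ∧
           v = cost α Rbar Xi W}))

end MSOG

namespace MSOG
attribute [local instance] Classical.propDecidable

/-! #### Win predicates -/

noncomputable def Game.WinV {P : Type} : Game P → Prop
  | .top => True
  | .bot => False
  | .node _ (some .falsifier) s => ∀ g : {x // x ∈ s}, Game.WinV g.1
  | .node _ (some .verifier) s => ∃ g : {x // x ∈ s}, Game.WinV g.1
  | .node _ none _ => False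
termination_by g => sizeOf g
decreasing_by all_goals exact Game.sizeOf_lt_node g.2

noncomputable def Game.WinF {P : Type} : Game P → Prop
  | .top => False
  | .bot => True
  | .node _ (some .falsifier) s => ∃ g : {x // x ∈ s}, Game.WinF g.1
  | .node _ (some .verifier) s => ∀ g : {x // x ∈ s}, Game.WinF g.1
  | .node _ none _ => False
termination_by g => sizeOf g
decreasing_by all_goals exact Game.sizeOf_lt_node g.2

@[simp] lemma winV_top {P : Type} : (Game.top : Game P).WinV := by rw [Game.WinV]; trivial
@[simp] lemma winV_bot {P : Type} : ¬ (Game.bot : Game P).WinV := by rw [Game.WinV]; exact id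
@[simp] lemma winV_fals {P : Type} (p : P) (s : List (Game P)) :
    (Game.node p (some .falsifier) s).WinV ↔ ∀ g ∈ s, g.WinV := by
  rw [Game.WinV]; exact ⟨fun h g hg => h ⟨g, hg⟩, fun h g => h g.1 g.2⟩
@[simp] lemma winV_ver {P : Type} (p : P) (s : List (Game P)) :
    (Game.node p (some .verifier) s).WinV ↔ ∃ g ∈ s, g.WinV := by
  rw [Game.WinV]; exact ⟨fun ⟨g, h⟩ => ⟨g.1, g.2, h⟩, fun ⟨g, hg, h⟩ => ⟨⟨g, hg⟩, h⟩⟩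
@[simp] lemma winV_none {P : Type} (p : P) (s : List (Game P)) :
    ¬ (Game.node p none s).WinV := by rw [Game.WinV]; exact id

@[simp] lemma winF_top {P : Type} : ¬ (Game.top : Game P).WinF := by rw [Game.WinF]; exact id
@[simp] lemma winF_bot {P : Type} : (Game.bot : Game P).WinF := by rw [Game.WinF]; trivial
@[simp] lemma winF_fals {P : Type} (p : P) (s : List (Game P)) :
    (Game.node p (some .falsifier) s).WinF ↔ ∃ g ∈ s, g.WinF := by
  rw [Game.WinF]; exact ⟨fun ⟨g, h⟩ => ⟨g.1, g.2, h⟩, fun ⟨g, hg, h⟩ => ⟨⟨g, hg⟩, h⟩⟩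
@[simp] lemma winF_ver {P : Type} (p : P) (s : List (Game P)) :
    (Game.node p (some .verifier) s).WinF ↔ ∀ g ∈ s, g.WinF := by
  rw [Game.WinF]; exact ⟨fun h g hg => h ⟨g, hg⟩, fun h g => h g.1 g.2⟩
@[simp] lemma winF_none {P : Type} (p : P) (s : List (Game P)) :
    ¬ (Game.node p none s).WinF := by rw [Game.WinF]; exact id

/-- Custom induction principle for games. -/
theorem Game.myrec {P : Type} {motive : Game P → Prop} (htop : motive .top) (hbot : motive .bot)
    (hnode : ∀ p o s, (∀ g ∈ s, motive g) → motive (.node p o s)) : ∀ g, motive g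
  | .top => htop
  | .bot => hbot
  | .node p o s => hnode p o s (fun g hg => Game.myrec htop hbot hnode g)
termination_by g => sizeOf g
decreasing_by exact Game.sizeOf_lt_node hg

theorem evalSpec {P : Type} (g : Game P) :
    (g.eval = .top ↔ g.WinV) ∧ (g.eval = .bot ↔ g.WinF) := by
  induction g using Game.myrec with
  | htop => simp [Game.eval]
  | hbot => simp [Game.eval]
  | hnode p o s ih =>
    rw [Game.eval.eq_def]
    simp only [List.map_subtype, List.unattach_attach]
    have hmemtop : Game.top ∈ s.map Game.eval ↔ ∃ g ∈ s, g.WinV := by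
      simp only [List.mem_map]
      exact ⟨fun ⟨g, hg, he⟩ => ⟨g, hg, ((ih g hg).1.mp he)⟩,
             fun ⟨g, hg, hw⟩ => ⟨g, hg, ((ih g hg).1.mpr hw)⟩⟩
    have hmembot : Game.bot ∈ s.map Game.eval ↔ ∃ g ∈ s, g.WinF := by
      simp only [List.mem_map]
      exact ⟨fun ⟨g, hg, he⟩ => ⟨g, hg, ((ih g hg).2.mp he)⟩,
             fun ⟨g, hg, hw⟩ => ⟨g, hg, ((ih g hg).2.mpr hw)⟩⟩
    have halltop : (∀ x ∈ s.map Game.eval, x = Game.top) ↔ ∀ g ∈ s, g.WinV := by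
      simp only [List.forall_mem_map]
      exact ⟨fun h g hg => (ih g hg).1.mp (h g hg), fun h g hg => (ih g hg).1.mpr (h g hg)⟩
    have hallbot : (∀ x ∈ s.map Game.eval, x = Game.bot) ↔ ∀ g ∈ s, g.WinF := by
      simp only [List.forall_mem_map]
      exact ⟨fun h g hg => (ih g hg).2.mp (h g hg), fun h g hg => (ih g hg).2.mpr (h g hg)⟩
    have hexcl : ∀ g ∈ s, ¬ (g.WinV ∧ g.WinF) := by
      rintro g hg ⟨h1, h2⟩
      have e1 := (ih g hg).1.mpr h1
      have e2 := (ih g hg).2.mpr h2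
      rw [e1] at e2; exact nomatch e2
    rcases o with _ | pl
    · simp only []
      constructor
      · simp only [winV_none]
        constructor
        · intro h; exact nomatch h
        · exact fun h => absurd h (by simp)
      · simp only [winF_none]
        constructor
        · intro h; exact nomatch h
        · exact fun h => absurd h (by simp)
    · cases pl
      · -- falsifier
        simp only [winV_fals, winF_fals]
        by_cases hall : ∀ x ∈ s.map Game.eval, x = Game.top
        · rw [if_pos hall]
          refine ⟨⟨fun _ => halltop.mp hall, fun _ => rfl⟩, ?_⟩
          constructor
          · intro h; exact nomatch h
          · rintro ⟨g, hg, hw⟩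
            exact absurd ⟨halltop.mp hall g hg, hw⟩ (hexcl g hg)
        · rw [if_neg hall]
          by_cases hb : Game.bot ∈ s.map Game.eval
          · rw [if_pos hb]
            refine ⟨?_, ⟨fun _ => hmembot.mp hb, fun _ => rfl⟩⟩
            constructor
            · intro h; exact nomatch h
            · intro h; exact absurd (halltop.mpr h) hall
          · rw [if_neg hb]
            constructor
            · constructor
              · intro h; exact nomatch h
              · intro h; exact absurd (halltop.mpr h) hall
            · constructor
              · intro h; exact nomatch h
              · intro h; exact absurd (hmembot.mpr h) hb
      · -- verifier
        simp only [winV_ver, winF_ver]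
        by_cases hall : ∀ x ∈ s.map Game.eval, x = Game.bot
        · rw [if_pos hall]
          refine ⟨?_, ⟨fun _ => hallbot.mp hall, fun _ => rfl⟩⟩
          constructor
          · intro h; exact nomatch h
          · rintro ⟨g, hg, hw⟩
            exact absurd ⟨hw, hallbot.mp hall g hg⟩ (hexcl g hg)
        · rw [if_neg hall]
          by_cases hb : Game.top ∈ s.map Game.eval
          · rw [if_pos hb]
            refine ⟨⟨fun _ => hmemtop.mp hb, fun _ => rfl⟩, ?_⟩
            constructor
            · intro h; exact nomatch h
            · intro h; exact absurd (hallbot.mpr h) hall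
          · rw [if_neg hb]
            constructor
            · constructor
              · intro h; exact nomatch h
              · intro h; exact absurd (hmemtop.mpr h) hb
            · constructor
              · intro h; exact nomatch h
              · intro h; exact absurd (hallbot.mpr h) hall

end MSOG

namespace MSOG
attribute [local instance] Classical.propDecidable

/-! #### convert and the converted win predicates -/

lemma convert_node (p : EPos) (o : Option Player) (s : List (Game EPos)) :
    convert (.node p o s) = Game.node (p.1.restrict p.1.nulValues, p.2.2) o
      (s.attach.filterMap fun g =>
        if g.1.IsFullNodeE then some (convert g.1) else none) := by
  rw [convert]

lemma mem_convert_subs {h : Game CPos} {s : List (Game EPos)} :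
    h ∈ (s.attach.filterMap fun g =>
        if g.1.IsFullNodeE then some (convert g.1) else none) ↔
      ∃ g ∈ s, g.IsFullNodeE ∧ h = convert g := by
  simp only [List.mem_filterMap, List.mem_attach, true_and]
  constructor
  · rintro ⟨⟨g, hg⟩, he⟩
    by_cases hf : g.IsFullNodeE
    · rw [if_pos hf] at he
      exact ⟨g, hg, hf, (Option.some_injective _ he).symm⟩
    · rw [if_neg hf] at he; exact absurd he (by simp)
  · rintro ⟨g, hg, hf, rfl⟩
    exact ⟨⟨g, hg⟩, by rw [if_pos hf]⟩

/-- Verifier wins the converted game. -/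
noncomputable def cWinV (g : Game EPos) : Prop := (convert g).WinV
/-- Falsifier wins the converted game. -/
noncomputable def cWinF (g : Game EPos) : Prop := (convert g).WinF

@[simp] lemma cWinV_top : cWinV .top := by rw [cWinV, convert]; simp
@[simp] lemma cWinV_bot : ¬ cWinV .bot := by rw [cWinV, convert]; simp
@[simp] lemma cWinF_top : ¬ cWinF .top := by rw [cWinF, convert]; simp
@[simp] lemma cWinF_bot : cWinF .bot := by rw [cWinF, convert]; simp

lemma cWinV_fals (p : EPos) (s : List (Game EPos)) :
    cWinV (.node p (some .falsifier) s) ↔ ∀ g ∈ s, g.IsFullNodeE → cWinV g := by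
  rw [cWinV, convert_node, winV_fals]
  constructor
  · intro h g hg hf; exact h _ (mem_convert_subs.mpr ⟨g, hg, hf, rfl⟩)
  · intro h x hx
    obtain ⟨g, hg, hf, rfl⟩ := mem_convert_subs.mp hx
    exact h g hg hf

lemma cWinV_ver (p : EPos) (s : List (Game EPos)) :
    cWinV (.node p (some .verifier) s) ↔ ∃ g ∈ s, g.IsFullNodeE ∧ cWinV g := by
  rw [cWinV, convert_node, winV_ver]
  constructor
  · rintro ⟨x, hx, hw⟩
    obtain ⟨g, hg, hf, rfl⟩ := mem_convert_subs.mp hx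
    exact ⟨g, hg, hf, hw⟩
  · rintro ⟨g, hg, hf, hw⟩
    exact ⟨_, mem_convert_subs.mpr ⟨g, hg, hf, rfl⟩, hw⟩

lemma cWinF_fals (p : EPos) (s : List (Game EPos)) :
    cWinF (.node p (some .falsifier) s) ↔ ∃ g ∈ s, g.IsFullNodeE ∧ cWinF g := by
  rw [cWinF, convert_node, winF_fals]
  constructor
  · rintro ⟨x, hx, hw⟩
    obtain ⟨g, hg, hf, rfl⟩ := mem_convert_subs.mp hx
    exact ⟨g, hg, hf, hw⟩
  · rintro ⟨g, hg, hf, hw⟩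
    exact ⟨_, mem_convert_subs.mpr ⟨g, hg, hf, rfl⟩, hw⟩

lemma cWinF_ver (p : EPos) (s : List (Game EPos)) :
    cWinF (.node p (some .verifier) s) ↔ ∀ g ∈ s, g.IsFullNodeE → cWinF g := by
  rw [cWinF, convert_node, winF_ver]
  constructor
  · intro h g hg hf; exact h _ (mem_convert_subs.mpr ⟨g, hg, hf, rfl⟩)
  · intro h x hx
    obtain ⟨g, hg, hf, rfl⟩ := mem_convert_subs.mp hx
    exact h g hg hf

@[simp] lemma cWinV_none (p : EPos) (s : List (Game EPos)) :
    ¬ cWinV (.node p none s) := by rw [cWinV, convert_node]; simp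

@[simp] lemma cWinF_none (p : EPos) (s : List (Game EPos)) :
    ¬ cWinF (.node p none s) := by rw [cWinF, convert_node]; simp

end MSOG

namespace MSOG
attribute [local instance] Classical.propDecidable

/-! #### Structure and isomorphism lemmas -/

lemma iso_refl (A : Struc) : Iso A A id := by
  refine ⟨rfl, Set.bijOn_id _, fun _ _ => Iff.rfl, fun c _ x h => by simpa, ?_⟩
  intro R _ t _
  simp

lemma Iso.full_iff {A B : Struc} {h : ℕ → ℕ} (hi : Iso A B h) :
    A.FullyInterpreted ↔ B.FullyInterpreted := by
  unfold Struc.FullyInterpreted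
  constructor
  · intro hf c hc
    have hc' : c ∈ A.voc.nulls := by rw [hi.voc_eq]; exact hc
    exact (hi.interp_iff c hc').mp (hf c hc')
  · intro hf c hc
    exact (hi.interp_iff c hc).mpr (hf c (by rw [← hi.voc_eq]; exact hc))

@[simp] lemma isFullNodeE_node (p : EPos) (o : Option Player) (s : List (Game EPos)) :
    Game.IsFullNodeE (.node p o s) ↔ p.1.FullyInterpreted := Iff.rfl

@[simp] lemma isFullNodeE_top : ¬ Game.IsFullNodeE .top := fun h => h
@[simp] lemma isFullNodeE_bot : ¬ Game.IsFullNodeE .bot := fun h => h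

/-! #### GEquiv lemmas -/

lemma gequiv_node_iff (pe : EPos → EPos → Prop) (p q : EPos) (o o' : Option Player)
    (s t : List (Game EPos)) :
    GEquiv pe (.node p o s) (.node q o' t) ↔ pe p q ∧ o = o' ∧
      ∃ e : {g // g ∈ s} ≃ {g // g ∈ t}, ∀ g : {g // g ∈ s}, GEquiv pe g.1 (e g).1 := by
  rw [GEquiv]

lemma gequiv_top_iff (pe : EPos → EPos → Prop) (g : Game EPos) :
    GEquiv pe .top g ↔ g = .top := by
  cases g <;> rw [GEquiv] <;> simp

lemma gequiv_bot_iff (pe : EPos → EPos → Prop) (g : Game EPos) :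
    GEquiv pe .bot g ↔ g = .bot := by
  cases g <;> rw [GEquiv] <;> simp

lemma gequiv_node_ex (pe : EPos → EPos → Prop) (p : EPos) (o : Option Player)
    (s : List (Game EPos)) (g : Game EPos) (h : GEquiv pe (.node p o s) g) :
    ∃ q t, g = .node q o t := by
  cases g with
  | top => exact absurd h (by simp [GEquiv])
  | bot => exact absurd h (by simp [GEquiv])
  | node q o' t =>
    rw [gequiv_node_iff] at h
    exact ⟨q, t, by rw [h.2.1]⟩

/-! #### Invariance of the converted win predicates under game equivalence -/

theorem inv_lemma : ∀ g : Game EPos, ∀ g', GEquivE g g' →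
    (g.IsFullNodeE ↔ g'.IsFullNodeE) ∧ (cWinV g ↔ cWinV g') ∧ (cWinF g ↔ cWinF g') := by
  intro g
  induction g using Game.myrec with
  | htop =>
    intro g' hg'
    rw [GEquivE, gequiv_top_iff] at hg'
    subst hg'; exact ⟨Iff.rfl, Iff.rfl, Iff.rfl⟩
  | hbot =>
    intro g' hg'
    rw [GEquivE, gequiv_bot_iff] at hg'
    subst hg'; exact ⟨Iff.rfl, Iff.rfl, Iff.rfl⟩
  | hnode p o s ih =>
    intro g' hg'
    obtain ⟨q, t, rfl⟩ := gequiv_node_ex _ _ _ _ _ hg'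
    rw [GEquivE, gequiv_node_iff] at hg'
    obtain ⟨hpe, -, e, he⟩ := hg'
    obtain ⟨-, -, -, -, hiso, hyi, -⟩ := hpe
    have hfull : (Game.node p o s).IsFullNodeE ↔ (Game.node q o t).IsFullNodeE := by
      simp only [isFullNodeE_node]
      exact Iso.full_iff hyi
    have key : ∀ g' ∈ t, ∃ g ∈ s, GEquivE g g' := by
      intro g' hg'
      refine ⟨(e.symm ⟨g', hg'⟩).1, (e.symm ⟨g', hg'⟩).2, ?_⟩
      have := he (e.symm ⟨g', hg'⟩)
      rwa [e.apply_symm_apply] at this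
    have key2 : ∀ g ∈ s, ∃ g' ∈ t, GEquivE g g' :=
      fun g hg => ⟨(e ⟨g, hg⟩).1, (e ⟨g, hg⟩).2, he ⟨g, hg⟩⟩
    refine ⟨hfull, ?_⟩
    rcases o with _ | pl
    · simp
    · cases pl
      · rw [cWinV_fals, cWinV_fals, cWinF_fals, cWinF_fals]
        constructor
        · constructor
          · intro h g' hg' hf
            obtain ⟨g, hg, hgg⟩ := key g' hg'
            obtain ⟨hf1, hf2, -⟩ := ih g hg g' hgg
            exact hf2.mp (h g hg (hf1.mpr hf))
          · intro h g hg hf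
            obtain ⟨g', hg', hgg⟩ := key2 g hg
            obtain ⟨hf1, hf2, -⟩ := ih g hg g' hgg
            exact hf2.mpr (h g' hg' (hf1.mp hf))
        · constructor
          · rintro ⟨g, hg, hf, hw⟩
            obtain ⟨g', hg', hgg⟩ := key2 g hg
            obtain ⟨hf1, -, hf3⟩ := ih g hg g' hgg
            exact ⟨g', hg', hf1.mp hf, hf3.mp hw⟩
          · rintro ⟨g', hg', hf, hw⟩
            obtain ⟨g, hg, hgg⟩ := key g' hg'
            obtain ⟨hf1, -, hf3⟩ := ih g hg g' hgg
            exact ⟨g, hg, hf1.mpr hf, hf3.mpr hw⟩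
      · rw [cWinV_ver, cWinV_ver, cWinF_ver, cWinF_ver]
        constructor
        · constructor
          · rintro ⟨g, hg, hf, hw⟩
            obtain ⟨g', hg', hgg⟩ := key2 g hg
            obtain ⟨hf1, hf2, -⟩ := ih g hg g' hgg
            exact ⟨g', hg', hf1.mp hf, hf2.mp hw⟩
          · rintro ⟨g', hg', hf, hw⟩
            obtain ⟨g, hg, hgg⟩ := key g' hg'
            obtain ⟨hf1, hf2, -⟩ := ih g hg g' hgg
            exact ⟨g, hg, hf1.mpr hf, hf2.mpr hw⟩
        · constructor
          · intro h g' hg' hf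
            obtain ⟨g, hg, hgg⟩ := key g' hg'
            obtain ⟨hf1, -, hf3⟩ := ih g hg g' hgg
            exact hf3.mp (h g hg (hf1.mpr hf))
          · intro h g hg hf
            obtain ⟨g', hg', hgg⟩ := key2 g hg
            obtain ⟨hf1, -, hf3⟩ := ih g hg g' hgg
            exact hf3.mpr (h g' hg' (hf1.mp hf))

end MSOG

namespace MSOG
attribute [local instance] Classical.propDecidable

/-! #### Reflexivity of game equivalence for wellformed games -/

lemma posEquivE_refl (p : EPos) (hX : p.2.1 ⊆ p.1.univ) : PosEquivE p p :=
  ⟨rfl, rfl, hX, hX, id, iso_refl _, fun _ _ => rfl⟩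

/-- All positions of the game have `X ⊆ univ`. -/
noncomputable def PosOk : Game EPos → Prop
  | .top => True
  | .bot => True
  | .node p _ s => p.2.1 ⊆ p.1.univ ∧ ∀ g : {x // x ∈ s}, PosOk g.1
termination_by g => sizeOf g
decreasing_by all_goals exact Game.sizeOf_lt_node g.2

@[simp] lemma posOk_top : PosOk .top := by rw [PosOk]; trivial
@[simp] lemma posOk_bot : PosOk .bot := by rw [PosOk]; trivial
lemma posOk_node {p : EPos} {o : Option Player} {s : List (Game EPos)} :
    PosOk (.node p o s) ↔ p.2.1 ⊆ p.1.univ ∧ ∀ g ∈ s, PosOk g := by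
  rw [PosOk]
  exact ⟨fun ⟨h1, h2⟩ => ⟨h1, fun g hg => h2 ⟨g, hg⟩⟩, fun ⟨h1, h2⟩ => ⟨h1, fun g => h2 g.1 g.2⟩⟩

lemma gequivE_refl_of_posOk : ∀ g : Game EPos, PosOk g → GEquivE g g := by
  intro g
  induction g using Game.myrec with
  | htop => intro _; rw [GEquivE, gequiv_top_iff]
  | hbot => intro _; rw [GEquivE, gequiv_bot_iff]
  | hnode p o s ih =>
    intro h
    rw [posOk_node] at h
    rw [GEquivE, gequiv_node_iff]
    exact ⟨posEquivE_refl p h.1, rfl, Equiv.refl _, fun g => ih g.1 g.2 (h.2 g.1 g.2)⟩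

/-! #### dedupEquiv lemmas -/

lemma dedup_sub : ∀ l : List (Game EPos), ∀ g ∈ dedupEquiv l, g ∈ l := by
  intro l
  induction l with
  | nil => intro g hg; rw [dedupEquiv] at hg; exact absurd hg (List.not_mem_nil)
  | cons a l ih =>
    intro g hg
    simp only [dedupEquiv] at hg
    split at hg
    · exact List.mem_cons_of_mem a (ih g hg)
    · rcases List.mem_cons.mp hg with h | h
      · exact h ▸ List.mem_cons_self (a := a) (l := l)
      · exact List.mem_cons_of_mem a (ih g h)

lemma dedup_eq_nil : ∀ l : List (Game EPos), dedupEquiv l = [] → l = [] := by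
  intro l
  induction l with
  | nil => intro _; rfl
  | cons a l ih =>
    intro h
    simp only [dedupEquiv] at h
    split at h
    · rename_i hex
      rw [h] at hex
      obtain ⟨g', hg', -⟩ := hex
      exact absurd hg' List.not_mem_nil
    · exact absurd h (by simp)

lemma dedup_exists : ∀ l : List (Game EPos), (∀ g ∈ l, GEquivE g g) →
    ∀ g ∈ l, ∃ g' ∈ dedupEquiv l, GEquivE g g' := by
  intro l
  induction l with
  | nil => intro _ g hg; exact absurd hg (List.not_mem_nil)
  | cons a l ih =>
    intro hrefl g hg
    simp only [dedupEquiv]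
    split
    · rename_i hex
      rcases List.mem_cons.mp hg with rfl | h
      · exact hex
      · exact ih (fun g hg => hrefl g (List.mem_cons_of_mem a hg)) g h
    · rcases List.mem_cons.mp hg with rfl | h
      · exact ⟨g, List.mem_cons_self, hrefl g (List.mem_cons_self)⟩
      · obtain ⟨g', hg', hgg⟩ := ih (fun g hg => hrefl g (List.mem_cons_of_mem a hg)) g h
        exact ⟨g', List.mem_cons_of_mem a hg', hgg⟩

/-! #### eval and reduce unfolding lemmas -/

lemma eval_none {P : Type} (p : P) (s : List (Game P)) :
    Game.eval (.node p none s) = .node p none (s.map Game.eval) := by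
  rw [Game.eval.eq_def]
  simp [List.map_subtype, List.unattach_attach]

lemma eval_fals_nil {P : Type} (p : P) :
    Game.eval (.node p (some .falsifier) []) = .top :=
  (evalSpec _).1.mpr (by simp)

lemma eval_ver_nil {P : Type} (p : P) :
    Game.eval (.node p (some .verifier) []) = .bot :=
  (evalSpec _).2.mpr (by simp)

/-- The pruned list of subgames kept by `reduce`. -/
noncomputable def keptOf (s : List (Game EPos)) : List (Game EPos) :=
  dedupEquiv ((s.map reduce).filter fun g => decide (g ≠ Game.top ∧ g ≠ Game.bot))

lemma reduce_node (p : EPos) (o : Option Player) (s : List (Game EPos))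
    (h : ¬ p.2.2.IsAtomic) :
    reduce (.node p o s) =
      if p.2.2.IsUniversal ∧ Game.bot ∈ s.map reduce then Game.bot
      else if p.2.2.IsExistential ∧ Game.top ∈ s.map reduce then Game.top
      else if keptOf s = []
        then Game.eval (.node p o ([] : List (Game EPos)))
        else Game.node p o (keptOf s) := by
  rw [reduce]
  rw [if_neg h]
  simp only [List.map_subtype, List.unattach_attach, keptOf]
  split_ifs with h1 h2 h3
  · rfl
  · rfl
  · exact (if_pos h3).symm
  · exact (if_neg h3).symm

end MSOG

namespace MSOG
attribute [local instance] Classical.propDecidable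

/-! #### MSO constructor predicate simp lemmas -/

section
variable {R : ℕ} {cs : List ℕ} {φ ψ : MSO} {c : ℕ}

@[simp] lemma isAtomic_atom : (MSO.atom R cs).IsAtomic := trivial
@[simp] lemma isAtomic_natom : (MSO.natom R cs).IsAtomic := trivial
@[simp] lemma not_isAtomic_conj : ¬ (MSO.conj φ ψ).IsAtomic := id
@[simp] lemma not_isAtomic_disj : ¬ (MSO.disj φ ψ).IsAtomic := id
@[simp] lemma not_isAtomic_fall : ¬ (MSO.fall c φ).IsAtomic := id
@[simp] lemma not_isAtomic_fex : ¬ (MSO.fex c φ).IsAtomic := id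
@[simp] lemma not_isAtomic_sall : ¬ (MSO.sall R φ).IsAtomic := id
@[simp] lemma not_isAtomic_sex : ¬ (MSO.sex R φ).IsAtomic := id
@[simp] lemma isUniversal_conj : (MSO.conj φ ψ).IsUniversal := trivial
@[simp] lemma isUniversal_fall : (MSO.fall c φ).IsUniversal := trivial
@[simp] lemma isUniversal_sall : (MSO.sall R φ).IsUniversal := trivial
@[simp] lemma not_isUniversal_disj : ¬ (MSO.disj φ ψ).IsUniversal := id
@[simp] lemma not_isUniversal_fex : ¬ (MSO.fex c φ).IsUniversal := id
@[simp] lemma not_isUniversal_sex : ¬ (MSO.sex R φ).IsUniversal := id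
@[simp] lemma isExistential_disj : (MSO.disj φ ψ).IsExistential := trivial
@[simp] lemma isExistential_fex : (MSO.fex c φ).IsExistential := trivial
@[simp] lemma isExistential_sex : (MSO.sex R φ).IsExistential := trivial
@[simp] lemma not_isExistential_conj : ¬ (MSO.conj φ ψ).IsExistential := id
@[simp] lemma not_isExistential_fall : ¬ (MSO.fall c φ).IsExistential := id
@[simp] lemma not_isExistential_sall : ¬ (MSO.sall R φ).IsExistential := id
end

/-! #### Structure lemmas -/

lemma mem_nulValues {B : Struc} {c x : ℕ} (hc : c ∈ B.voc.nulls) (hx : B.nul c = some x) :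
    x ∈ B.nulValues := by
  rw [Struc.nulValues, Finset.mem_biUnion]
  exact ⟨c, hc, by simp [hx]⟩

@[simp] lemma restrict_voc (B : Struc) (s : Finset ℕ) : (B.restrict s).voc = B.voc := rfl
@[simp] lemma restrict_univ (B : Struc) (s : Finset ℕ) :
    (B.restrict s).univ = B.univ ∩ s := rfl
@[simp] lemma addNul_voc (B : Struc) (c : ℕ) (u : Option ℕ) :
    (B.addNul c u).voc = B.voc.addNul c := rfl
@[simp] lemma addNul_univ (B : Struc) (c : ℕ) (u : Option ℕ) :
    (B.addNul c u).univ = B.univ := rfl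
@[simp] lemma addRel_voc (B : Struc) (R : ℕ) (U : Finset ℕ) :
    (B.addRel R U).voc = B.voc.addRel R := rfl
@[simp] lemma addRel_univ (B : Struc) (R : ℕ) (U : Finset ℕ) :
    (B.addRel R U).univ = B.univ := rfl
@[simp] lemma addNul_rels (τ : Vocab) (c : ℕ) : (τ.addNul c).rels = τ.rels := rfl
@[simp] lemma addNul_nulls (τ : Vocab) (c : ℕ) : (τ.addNul c).nulls = insert c τ.nulls := rfl
@[simp] lemma addRel_rels (τ : Vocab) (R : ℕ) : (τ.addRel R).rels = insert R τ.rels := rfl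
@[simp] lemma addRel_nulls (τ : Vocab) (R : ℕ) : (τ.addRel R).nulls = τ.nulls := rfl

lemma restrict_full_iff {B : Struc} {s : Finset ℕ}
    (hs : ∀ c ∈ B.voc.nulls, ∀ x, B.nul c = some x → x ∈ s) :
    (B.restrict s).FullyInterpreted ↔ B.FullyInterpreted := by
  unfold Struc.FullyInterpreted
  apply forall_congr'
  intro c
  apply imp_congr_right
  intro hc
  show (Struc.nul _ c).isSome ↔ _
  show (match B.nul c with
    | some x => if x ∈ s then some x else none
    | none => none).isSome ↔ _
  cases hnul : B.nul c with
  | none => simp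
  | some x => simp [hs c hc x hnul]

lemma restrict_nulValues_full_iff {B : Struc} (X : Finset ℕ) :
    (B.restrict (X ∪ B.nulValues)).FullyInterpreted ↔ B.FullyInterpreted :=
  restrict_full_iff fun c hc x hx => Finset.mem_union_right _ (mem_nulValues hc hx)

lemma Struc.WF.addNul {ar : ℕ → ℕ} {A : Struc} {c : ℕ} {u : Option ℕ} (h : A.WF ar)
    (hu : ∀ a, u = some a → a ∈ A.univ) : (A.addNul c u).WF ar := by
  constructor
  · intro R t hr
    exact h.rel_wf R t hr
  · intro d x hx
    show d ∈ insert c A.voc.nulls ∧ x ∈ A.univ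
    have : (if d = c then u else A.nul d) = some x := hx
    split at this
    · subst ‹d = c›; exact ⟨Finset.mem_insert_self _ _, hu x this⟩
    · obtain ⟨h1, h2⟩ := h.nul_wf d x this
      exact ⟨Finset.mem_insert_of_mem h1, h2⟩

lemma Struc.WF.addRel {ar : ℕ → ℕ} {A : Struc} {R : ℕ} {U : Finset ℕ} (h : A.WF ar)
    (hU : U ⊆ A.univ) (har : ar R = 1) : (A.addRel R U).WF ar := by
  constructor
  · intro S t hr
    show S ∈ insert R A.voc.rels ∧ _
    have : (if S = R then ∃ x ∈ U, t = [x] else A.rel S t) := hr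
    split at this
    · subst ‹S = R›
      obtain ⟨x, hxU, rfl⟩ := this
      refine ⟨Finset.mem_insert_self _ _, by simp [har], ?_⟩
      intro y hy
      rw [List.mem_singleton] at hy
      exact hy ▸ hU hxU
    · obtain ⟨h1, h2, h3⟩ := h.rel_wf S t this
      exact ⟨Finset.mem_insert_of_mem h1, h2, h3⟩
  · exact h.nul_wf

lemma full_addNul_some {A : Struc} {c a : ℕ} (h : A.FullyInterpreted) :
    (A.addNul c (some a)).FullyInterpreted := by
  intro d hd
  show (if d = c then some a else A.nul d).isSome
  split
  · simp
  · rw [addNul_voc, addNul_nulls, Finset.mem_insert] at hd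
    rcases hd with h' | hd
    · exact absurd h' ‹¬ d = c›
    · exact h d hd

lemma not_full_addNul_none {A : Struc} {c : ℕ} : ¬ (A.addNul c none).FullyInterpreted := by
  intro h
  have := h c (by rw [addNul_voc, addNul_nulls]; exact Finset.mem_insert_self _ _)
  have he : (A.addNul c none).nul c = none := by show (if c = c then none else _) = none; simp
  rw [he] at this
  exact absurd this (by simp)

lemma full_addRel {A : Struc} {R : ℕ} {U : Finset ℕ} (h : A.FullyInterpreted) :
    (A.addRel R U).FullyInterpreted := fun c hc => h c hc

/-! #### Completions -/

/-- `C` is a fully interpreted extension of `B` (same universe and relations). -/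
def Comp (ar : ℕ → ℕ) (B C : Struc) : Prop :=
  C.voc = B.voc ∧ C.univ = B.univ ∧ C.rel = B.rel ∧ C.WF ar ∧ C.FullyInterpreted ∧
    ∀ c x, B.nul c = some x → C.nul c = some x

lemma comp_self {ar : ℕ → ℕ} {B : Struc} (h : B.WF ar) (hf : B.FullyInterpreted) :
    Comp ar B B := ⟨rfl, rfl, rfl, h, hf, fun _ _ hx => hx⟩

lemma comp_addNul {ar : ℕ → ℕ} {B C : Struc} {c a : ℕ} {u : Option ℕ} (h : Comp ar B C)
    (ha : a ∈ B.univ) (hu : u = none ∨ u = some a) :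
    Comp ar (B.addNul c u) (C.addNul c (some a)) := by
  obtain ⟨h1, h2, h3, h4, h5, h6⟩ := h
  refine ⟨by rw [addNul_voc, addNul_voc, h1], h2, h3, ?_, full_addNul_some h5, ?_⟩
  · exact h4.addNul (fun b hb => by rw [h2]; exact (Option.some_injective _ hb) ▸ ha)
  · intro d x hx
    have hx' : (if d = c then u else B.nul d) = some x := hx
    show (if d = c then some a else C.nul d) = some x
    split at hx'
    · rw [if_pos ‹d = c›]
      rcases hu with rfl | rfl
      · exact absurd hx' (by simp)
      · exact hx'
    · rw [if_neg ‹¬ d = c›]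
      exact h6 d x hx'

lemma comp_addRel {ar : ℕ → ℕ} {B C : Struc} {R : ℕ} {U : Finset ℕ} (h : Comp ar B C)
    (hU : U ⊆ B.univ) (har : ar R = 1) : Comp ar (B.addRel R U) (C.addRel R U) := by
  obtain ⟨h1, h2, h3, h4, h5, h6⟩ := h
  refine ⟨by rw [addRel_voc, addRel_voc, h1], h2, ?_, ?_, full_addRel h5, h6⟩
  · show (fun S t => if S = R then ∃ x ∈ U, t = [x] else C.rel S t) = _
    rw [h3]
    rfl
  · exact h4.addRel (by rw [h2]; exact hU) har

/-! #### mapM lemmas for atoms -/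

lemma mapM_ext {B C : Struc} (hext : ∀ c x, B.nul c = some x → C.nul c = some x) :
    ∀ (cs : List ℕ) (t : List ℕ), cs.mapM B.nul = some t → cs.mapM C.nul = some t := by
  intro cs
  induction cs with
  | nil => intro t h; simpa using h
  | cons a l ih =>
    intro t h
    rw [List.mapM_cons] at h ⊢
    cases ha : B.nul a with
    | none => rw [ha] at h; simp at h
    | some x =>
      rw [ha] at h
      rw [hext a x ha]
      cases hl : l.mapM B.nul with
      | none => rw [hl] at h; simp at h
      | some ts =>
        rw [hl] at h
        rw [ih ts hl]
        simpa using h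

lemma mapM_isSome {B : Struc} :
    ∀ cs : List ℕ, (∀ c ∈ cs, (B.nul c).isSome) → ∃ t, cs.mapM B.nul = some t := by
  intro cs
  induction cs with
  | nil => intro _; exact ⟨[], rfl⟩
  | cons a l ih =>
    intro h
    obtain ⟨x, hx⟩ := Option.isSome_iff_exists.mp (h a (List.mem_cons_self))
    obtain ⟨ts, hts⟩ := ih (fun c hc => h c (List.mem_cons_of_mem a hc))
    exact ⟨x :: ts, by rw [List.mapM_cons, hx, hts]; rfl⟩

lemma sat_atom_transfer {ar : ℕ → ℕ} {B C : Struc} {R : ℕ} {cs : List ℕ}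
    (h : Comp ar B C) (hi : ∀ c ∈ cs, (B.nul c).isSome) :
    (Sat C (.atom R cs) ↔ Sat B (.atom R cs)) ∧ (Sat C (.natom R cs) ↔ Sat B (.natom R cs)) := by
  obtain ⟨t, ht⟩ := mapM_isSome cs hi
  have htC : cs.mapM C.nul = some t := mapM_ext h.2.2.2.2.2 cs t ht
  rw [show Sat C (.atom R cs) = ∃ t', cs.mapM C.nul = some t' ∧ C.rel R t' from rfl]
  rw [show Sat B (.atom R cs) = ∃ t', cs.mapM B.nul = some t' ∧ B.rel R t' from rfl]
  rw [show Sat C (.natom R cs) = ∃ t', cs.mapM C.nul = some t' ∧ ¬ C.rel R t' from rfl]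
  rw [show Sat B (.natom R cs) = ∃ t', cs.mapM B.nul = some t' ∧ ¬ B.rel R t' from rfl]
  rw [h.2.2.1]
  constructor
  · constructor
    · rintro ⟨t', ht', hr⟩
      rw [htC] at ht'
      exact ⟨t, ht, (Option.some_injective _ ht') ▸ hr⟩
    · rintro ⟨t', ht', hr⟩
      rw [ht] at ht'
      exact ⟨t, htC, (Option.some_injective _ ht') ▸ hr⟩
  · constructor
    · rintro ⟨t', ht', hr⟩
      rw [htC] at ht'
      exact ⟨t, ht, (Option.some_injective _ ht') ▸ hr⟩
    · rintro ⟨t', ht', hr⟩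
      rw [ht] at ht'
      exact ⟨t, htC, (Option.some_injective _ ht') ▸ hr⟩

lemma full_isSome {B : Struc} {cs : List ℕ} (hfull : B.FullyInterpreted)
    (hcs : ∀ c ∈ cs, c ∈ B.voc.nulls) : ∀ c ∈ cs, (B.nul c).isSome :=
  fun c hc => hfull c (hcs c hc)

/-! #### keptOf lemmas -/

lemma mem_keptOf {s : List (Game EPos)} {g : Game EPos} (hg : g ∈ keptOf s) :
    ∃ h ∈ s, reduce h = g ∧ g ≠ Game.top ∧ g ≠ Game.bot := by
  have h1 := dedup_sub _ _ hg
  rw [List.mem_filter] at h1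
  obtain ⟨h2, h3⟩ := h1
  rw [List.mem_map] at h2
  obtain ⟨h, hh, rfl⟩ := h2
  rw [decide_eq_true_eq] at h3
  exact ⟨h, hh, rfl, h3.1, h3.2⟩

lemma keptOf_exists {s : List (Game EPos)} (hok : ∀ h ∈ s, PosOk (reduce h)) {g : Game EPos}
    (hg : g ∈ s) (h1 : reduce g ≠ .top) (h2 : reduce g ≠ .bot) :
    ∃ g' ∈ keptOf s, GEquivE (reduce g) g' := by
  apply dedup_exists
  · intro x hx
    rw [List.mem_filter, List.mem_map] at hx
    obtain ⟨⟨h, hh, rfl⟩, -⟩ := hx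
    exact gequivE_refl_of_posOk _ (hok h hh)
  · rw [List.mem_filter]
    refine ⟨List.mem_map_of_mem hg, by rw [decide_eq_true_eq]; exact ⟨h1, h2⟩⟩

lemma keptOf_nil {s : List (Game EPos)} (hk : keptOf s = []) {g : Game EPos} (hg : g ∈ s) :
    reduce g = .top ∨ reduce g = .bot := by
  have hf := dedup_eq_nil _ hk
  rw [List.filter_eq_nil_iff] at hf
  have := hf (reduce g) (List.mem_map_of_mem hg)
  rw [decide_eq_true_eq] at this
  push_neg at this
  by_cases h : reduce g = Game.top
  · exact Or.inl h
  · exact Or.inr (this h)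

end MSOG

namespace MSOG
attribute [local instance] Classical.propDecidable

lemma reduce_atomic (p : EPos) (o : Option Player) (s : List (Game EPos))
    (hp : p.2.2.IsAtomic) : reduce (.node p o s) = Game.eval (.node p o s) := by
  rw [reduce, if_pos hp]

/-! #### Shape of reduced extended model checking games -/

lemma reduce_emc_shape (φ : MSO) (B : Struc) (X : Finset ℕ) :
    reduce (EMC φ B X) = .top ∨ reduce (EMC φ B X) = .bot ∨
      ∃ o s, reduce (EMC φ B X) = .node (B.restrict (X ∪ B.nulValues), X, φ) o s := by
  have hat : ∀ (ψ : MSO) (o : Option Player), ψ.IsAtomic →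
      EMC ψ B X = .node (B.restrict (X ∪ B.nulValues), X, ψ) o [] →
      reduce (EMC ψ B X) = .top ∨ reduce (EMC ψ B X) = .bot ∨
        ∃ o' s, reduce (EMC ψ B X) = .node (B.restrict (X ∪ B.nulValues), X, ψ) o' s := by
    intro ψ o hψ he
    rw [he, reduce_atomic _ _ _ hψ]
    rcases o with _ | pl
    · rw [eval_none]
      exact Or.inr (Or.inr ⟨none, [], rfl⟩)
    · cases pl
      · rw [eval_fals_nil]; exact Or.inl rfl
      · rw [eval_ver_nil]; exact Or.inr (Or.inl rfl)
  cases φ with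
  | atom R cs => exact hat _ _ isAtomic_atom (by rw [EMC])
  | natom R cs => exact hat _ _ isAtomic_natom (by rw [EMC])
  | conj φ ψ =>
    rw [EMC, reduce_node _ _ _ not_isAtomic_conj]
    split_ifs
    · exact Or.inr (Or.inl rfl)
    · exact Or.inl rfl
    · rw [eval_fals_nil]; exact Or.inl rfl
    · exact Or.inr (Or.inr ⟨_, _, rfl⟩)
  | disj φ ψ =>
    rw [EMC, reduce_node _ _ _ not_isAtomic_disj]
    split_ifs
    · exact Or.inr (Or.inl rfl)
    · exact Or.inl rfl
    · rw [eval_ver_nil]; exact Or.inr (Or.inl rfl)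
    · exact Or.inr (Or.inr ⟨_, _, rfl⟩)
  | fall c φ =>
    rw [EMC, reduce_node _ _ _ not_isAtomic_fall]
    split_ifs
    · exact Or.inr (Or.inl rfl)
    · exact Or.inl rfl
    · rw [eval_fals_nil]; exact Or.inl rfl
    · exact Or.inr (Or.inr ⟨_, _, rfl⟩)
  | fex c φ =>
    rw [EMC, reduce_node _ _ _ not_isAtomic_fex]
    split_ifs
    · exact Or.inr (Or.inl rfl)
    · exact Or.inl rfl
    · rw [eval_ver_nil]; exact Or.inr (Or.inl rfl)
    · exact Or.inr (Or.inr ⟨_, _, rfl⟩)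
  | sall R φ =>
    rw [EMC, reduce_node _ _ _ not_isAtomic_sall]
    split_ifs
    · exact Or.inr (Or.inl rfl)
    · exact Or.inl rfl
    · rw [eval_fals_nil]; exact Or.inl rfl
    · exact Or.inr (Or.inr ⟨_, _, rfl⟩)
  | sex R φ =>
    rw [EMC, reduce_node _ _ _ not_isAtomic_sex]
    split_ifs
    · exact Or.inr (Or.inl rfl)
    · exact Or.inl rfl
    · rw [eval_ver_nil]; exact Or.inr (Or.inl rfl)
    · exact Or.inr (Or.inr ⟨_, _, rfl⟩)

/-! #### The classical model checking game computes satisfaction -/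

lemma win_MC (φ : MSO) : ∀ A : Struc,
    ((MC φ A).WinV ↔ Sat A φ) ∧ ((MC φ A).WinF ↔ ¬ Sat A φ) := by
  induction φ with
  | atom R cs =>
    intro A
    rw [MC]
    by_cases hs : Sat A (.atom R cs)
    · rw [if_pos hs]; simp [hs]
    · rw [if_neg hs]; simp [hs]
  | natom R cs =>
    intro A
    rw [MC]
    by_cases hs : Sat A (.natom R cs)
    · rw [if_pos hs]; simp [hs]
    · rw [if_neg hs]; simp [hs]
  | conj φ ψ ihφ ihψ =>
    intro A
    rw [MC, show Sat A (.conj φ ψ) = (Sat A φ ∧ Sat A ψ) from rfl]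
    constructor
    · rw [winV_fals]
      simp only [List.mem_cons, List.not_mem_nil, or_false, forall_eq_or_imp, forall_eq]
      rw [(ihφ A).1, (ihψ A).1]
    · rw [winF_fals]
      simp only [List.mem_cons, List.not_mem_nil, or_false, exists_eq_or_imp, exists_eq_left]
      rw [(ihφ A).2, (ihψ A).2]
      tauto
  | disj φ ψ ihφ ihψ =>
    intro A
    rw [MC, show Sat A (.disj φ ψ) = (Sat A φ ∨ Sat A ψ) from rfl]
    constructor
    · rw [winV_ver]
      simp only [List.mem_cons, List.not_mem_nil, or_false, exists_eq_or_imp, exists_eq_left]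
      rw [(ihφ A).1, (ihψ A).1]
    · rw [winF_ver]
      simp only [List.mem_cons, List.not_mem_nil, or_false, forall_eq_or_imp, forall_eq]
      rw [(ihφ A).2, (ihψ A).2]
      tauto
  | fall c φ ih =>
    intro A
    rw [MC, show Sat A (.fall c φ) = (∀ a ∈ A.univ, Sat (A.addNul c (some a)) φ) from rfl]
    constructor
    · rw [winV_fals]
      simp only [List.mem_map, Finset.mem_toList]
      constructor
      · intro h a ha
        exact (ih _).1.mp (h _ ⟨a, ha, rfl⟩)
      · rintro h g ⟨a, ha, rfl⟩
        exact (ih _).1.mpr (h a ha)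
    · rw [winF_fals]
      simp only [List.mem_map, Finset.mem_toList]
      push_neg
      constructor
      · rintro ⟨g, ⟨a, ha, rfl⟩, hw⟩
        exact ⟨a, ha, (ih _).2.mp hw⟩
      · rintro ⟨a, ha, hs⟩
        exact ⟨_, ⟨a, ha, rfl⟩, (ih _).2.mpr (fun h => hs h)⟩
  | fex c φ ih =>
    intro A
    rw [MC, show Sat A (.fex c φ) = (∃ a ∈ A.univ, Sat (A.addNul c (some a)) φ) from rfl]
    constructor
    · rw [winV_ver]
      simp only [List.mem_map, Finset.mem_toList]
      constructor
      · rintro ⟨g, ⟨a, ha, rfl⟩, hw⟩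
        exact ⟨a, ha, (ih _).1.mp hw⟩
      · rintro ⟨a, ha, hs⟩
        exact ⟨_, ⟨a, ha, rfl⟩, (ih _).1.mpr hs⟩
    · rw [winF_ver]
      simp only [List.mem_map, Finset.mem_toList]
      push_neg
      constructor
      · rintro h a ha
        exact (ih _).2.mp (h _ ⟨a, ha, rfl⟩)
      · rintro h g ⟨a, ha, rfl⟩
        exact (ih _).2.mpr (h a ha)
  | sall R φ ih =>
    intro A
    rw [MC, show Sat A (.sall R φ) = (∀ U ⊆ A.univ, Sat (A.addRel R U) φ) from rfl]
    constructor
    · rw [winV_fals]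
      simp only [List.mem_map, Finset.mem_toList, Finset.mem_powerset]
      constructor
      · intro h U hU
        exact (ih _).1.mp (h _ ⟨U, hU, rfl⟩)
      · rintro h g ⟨U, hU, rfl⟩
        exact (ih _).1.mpr (h U hU)
    · rw [winF_fals]
      simp only [List.mem_map, Finset.mem_toList, Finset.mem_powerset]
      push_neg
      constructor
      · rintro ⟨g, ⟨U, hU, rfl⟩, hw⟩
        exact ⟨U, hU, (ih _).2.mp hw⟩
      · rintro ⟨U, hU, hs⟩
        exact ⟨_, ⟨U, hU, rfl⟩, (ih _).2.mpr (fun h => hs h)⟩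
  | sex R φ ih =>
    intro A
    rw [MC, show Sat A (.sex R φ) = (∃ U ⊆ A.univ, Sat (A.addRel R U) φ) from rfl]
    constructor
    · rw [winV_ver]
      simp only [List.mem_map, Finset.mem_toList, Finset.mem_powerset]
      constructor
      · rintro ⟨g, ⟨U, hU, rfl⟩, hw⟩
        exact ⟨U, hU, (ih _).1.mp hw⟩
      · rintro ⟨U, hU, hs⟩
        exact ⟨_, ⟨U, hU, rfl⟩, (ih _).1.mpr hs⟩
    · rw [winF_ver]
      simp only [List.mem_map, Finset.mem_toList, Finset.mem_powerset]
      push_neg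
      constructor
      · rintro h U hU
        exact (ih _).2.mp (h _ ⟨U, hU, rfl⟩)
      · rintro h g ⟨U, hU, rfl⟩
        exact (ih _).2.mpr (h U hU)

end MSOG

namespace MSOG
attribute [local instance] Classical.propDecidable

/-- The conclusion of the main induction for `reduce (EMC φ B X)`. -/
def Concl (ar : ℕ → ℕ) (φ : MSO) (B : Struc) (X : Finset ℕ) : Prop :=
  (B.univ = ∅ → reduce (EMC φ B X) ≠ .top ∧ reduce (EMC φ B X) ≠ .bot) ∧
  (reduce (EMC φ B X) = .top → ∀ C, Comp ar B C → Sat C φ) ∧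
  (reduce (EMC φ B X) = .bot → ∀ C, Comp ar B C → ¬ Sat C φ) ∧
  (B.FullyInterpreted → (cWinV (reduce (EMC φ B X)) ↔ Sat B φ) ∧
    (cWinF (reduce (EMC φ B X)) ↔ ¬ Sat B φ)) ∧
  PosOk (reduce (EMC φ B X))

/-- Main lemma, generic universal (falsifier) case. -/
theorem UL {ar : ℕ → ℕ} {φ0 : MSO} {B : Struc} {X : Finset ℕ}
    (hWF : B.WF ar) (hXu : X ⊆ B.univ)
    (hna : ¬ φ0.IsAtomic) (hun : φ0.IsUniversal) (hnex : ¬ φ0.IsExistential)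
    (chl : List (Struc × MSO)) (hne : chl ≠ [])
    (hEMC : EMC φ0 B X = .node (B.restrict (X ∪ B.nulValues), X, φ0) (some .falsifier)
      (chl.map fun bc => EMC bc.2 bc.1 X))
    (huniv : ∀ bc ∈ chl, bc.1.univ = B.univ)
    (hchWF : ∀ bc ∈ chl, bc.1.WF ar)
    (hIH : ∀ bc ∈ chl, Concl ar bc.2 bc.1 X)
    (hallU : ∀ C, Comp ar B C →
      (∀ bc ∈ chl, ∀ D, Comp ar bc.1 D → Sat D bc.2) → Sat C φ0)
    (hbotU : ∀ C, Comp ar B C → B.univ ≠ ∅ → ∀ bc ∈ chl,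
      (∀ D, Comp ar bc.1 D → ¬ Sat D bc.2) → ¬ Sat C φ0)
    (hfull1 : B.FullyInterpreted →
      (Sat B φ0 ↔ ∀ bc ∈ chl, bc.1.FullyInterpreted → Sat bc.1 bc.2)) :
    Concl ar φ0 B X := by
  unfold Concl
  rw [hEMC]
  set subs := chl.map fun bc => EMC bc.2 bc.1 X with hsubs
  have hrw := reduce_node (B.restrict (X ∪ B.nulValues), X, φ0) (some .falsifier) subs hna
  have hmaps : subs.map reduce = chl.map fun bc => reduce (EMC bc.2 bc.1 X) := by
    rw [hsubs, List.map_map]; rfl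
  have hbotmem : Game.bot ∈ subs.map reduce ↔
      ∃ bc ∈ chl, reduce (EMC bc.2 bc.1 X) = Game.bot := by rw [hmaps, List.mem_map]
  have htopmem : Game.top ∈ subs.map reduce ↔
      ∃ bc ∈ chl, reduce (EMC bc.2 bc.1 X) = Game.top := by rw [hmaps, List.mem_map]
  have hchOk : ∀ g ∈ subs, PosOk (reduce g) := by
    intro g hg
    rw [hsubs, List.mem_map] at hg
    obtain ⟨bc, hbc, rfl⟩ := hg
    exact (hIH bc hbc).2.2.2.2
  have hXp : X ⊆ (B.restrict (X ∪ B.nulValues)).univ :=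
    fun x hx => Finset.mem_inter.mpr ⟨hXu hx, Finset.mem_union_left _ hx⟩
  by_cases hbot : Game.bot ∈ subs.map reduce
  · -- some subgame reduces to ⊥; the whole game reduces to ⊥
    have hr : reduce (Game.node (B.restrict (X ∪ B.nulValues), X, φ0) (some .falsifier) subs)
        = Game.bot := by rw [hrw, if_pos ⟨hun, hbot⟩]
    rw [hr]
    obtain ⟨bc, hbc, hbcbot⟩ := hbotmem.mp hbot
    have hNE : B.univ ≠ ∅ := by
      intro h0
      exact ((hIH bc hbc).1 (by rw [huniv bc hbc]; exact h0)).2 hbcbot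
    have hnsat : ∀ C, Comp ar B C → ¬ Sat C φ0 := fun C hC =>
      hbotU C hC hNE bc hbc (fun D hD => (hIH bc hbc).2.2.1 hbcbot D hD)
    refine ⟨fun h => absurd h hNE, fun h => (by cases h), fun _ => hnsat, ?_, posOk_bot⟩
    intro hBf
    have := hnsat B (comp_self hWF hBf)
    constructor
    · simp [this]
    · simp [this]
  · by_cases hk : keptOf subs = []
    · -- all subgames reduce to ⊤
      have halltop : ∀ bc ∈ chl, reduce (EMC bc.2 bc.1 X) = Game.top := by
        intro bc hbc
        rcases keptOf_nil hk (by rw [hsubs]; exact List.mem_map_of_mem hbc) with h | h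
        · exact h
        · exact absurd (hbotmem.mpr ⟨bc, hbc, h⟩) hbot
      have hr : reduce (Game.node (B.restrict (X ∪ B.nulValues), X, φ0) (some .falsifier) subs)
          = Game.top := by
        rw [hrw, if_neg (fun h => hbot h.2), if_neg (fun h => hnex h.1), if_pos hk,
          eval_fals_nil]
      rw [hr]
      have hsat : ∀ C, Comp ar B C → Sat C φ0 := fun C hC =>
        hallU C hC (fun bc hbc D hD => (hIH bc hbc).2.1 (halltop bc hbc) D hD)
      obtain ⟨bc, hbc⟩ := List.exists_mem_of_ne_nil chl hne
      refine ⟨?_, fun _ => hsat, fun h => (by cases h), ?_, posOk_top⟩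
      · intro h0
        exact absurd (halltop bc hbc)
          (((hIH bc hbc).1 (by rw [huniv bc hbc]; exact h0)).1)
      · intro hBf
        have := hsat B (comp_self hWF hBf)
        constructor
        · simp [this]
        · simp [this]
    · -- undetermined node
      have hr : reduce (Game.node (B.restrict (X ∪ B.nulValues), X, φ0) (some .falsifier) subs)
          = Game.node (B.restrict (X ∪ B.nulValues), X, φ0) (some .falsifier) (keptOf subs) := by
        rw [hrw, if_neg (fun h => hbot h.2), if_neg (fun h => hnex h.1), if_neg hk]
      rw [hr]
      refine ⟨fun _ => ⟨fun h => (by cases h), fun h => (by cases h)⟩,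
        fun h => (by cases h), fun h => (by cases h), ?_, ?_⟩
      swap
      · rw [posOk_node]
        refine ⟨hXp, ?_⟩
        intro g hg
        obtain ⟨h, hh, rfl, -, -⟩ := mem_keptOf hg
        exact hchOk h hh
      intro hBf
      -- fact A : kept full subgames correspond to fully interpreted children
      have factA : ∀ g ∈ keptOf subs, g.IsFullNodeE → ∃ bc ∈ chl, bc.1.FullyInterpreted ∧
          (cWinV g ↔ Sat bc.1 bc.2) ∧ (cWinF g ↔ ¬ Sat bc.1 bc.2) := by
        intro g hg hfg
        obtain ⟨h, hh, hred, hgt, hgb⟩ := mem_keptOf hg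
        rw [hsubs, List.mem_map] at hh
        obtain ⟨bc, hbc, rfl⟩ := hh
        rcases reduce_emc_shape bc.2 bc.1 X with hs | hs | ⟨o, s, hs⟩
        · exact absurd (hred ▸ hs) hgt
        · exact absurd (hred ▸ hs) hgb
        · rw [← hred, hs] at hfg
          rw [isFullNodeE_node] at hfg
          have hbf : bc.1.FullyInterpreted := (restrict_nulValues_full_iff X).mp hfg
          refine ⟨bc, hbc, hbf, ?_⟩
          rw [← hred]
          exact (hIH bc hbc).2.2.2.1 hbf
      -- fact B : fully interpreted children with undetermined reduct have a kept representative
      have factB : ∀ bc ∈ chl, bc.1.FullyInterpreted →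
          reduce (EMC bc.2 bc.1 X) ≠ Game.top → reduce (EMC bc.2 bc.1 X) ≠ Game.bot →
          ∃ g ∈ keptOf subs, g.IsFullNodeE ∧
            (cWinV g ↔ Sat bc.1 bc.2) ∧ (cWinF g ↔ ¬ Sat bc.1 bc.2) := by
        intro bc hbc hbf hnt hnb
        obtain ⟨g', hg', heq⟩ := keptOf_exists hchOk
          (by rw [hsubs]; exact List.mem_map_of_mem hbc) hnt hnb
        obtain ⟨hf1, hf2, hf3⟩ := inv_lemma _ _ heq
        have hfull : (reduce (EMC bc.2 bc.1 X)).IsFullNodeE := by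
          rcases reduce_emc_shape bc.2 bc.1 X with hs | hs | ⟨o, s, hs⟩
          · exact absurd hs hnt
          · exact absurd hs hnb
          · rw [hs, isFullNodeE_node]
            exact (restrict_nulValues_full_iff X).mpr hbf
        have hiff := (hIH bc hbc).2.2.2.1 hbf
        exact ⟨g', hg', hf1.mp hfull,
          by rw [← hf2]; exact hiff.1, by rw [← hf3]; exact hiff.2⟩
      rw [cWinV_fals, cWinF_fals]
      constructor
      · constructor
        · intro h
          rw [hfull1 hBf]
          intro bc hbc hbf
          by_cases ht : reduce (EMC bc.2 bc.1 X) = Game.top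
          · exact (hIH bc hbc).2.1 ht bc.1 (comp_self (hchWF bc hbc) hbf)
          · by_cases hb : reduce (EMC bc.2 bc.1 X) = Game.bot
            · exact absurd (hbotmem.mpr ⟨bc, hbc, hb⟩) hbot
            · obtain ⟨g, hg, hfg, hV, -⟩ := factB bc hbc hbf ht hb
              exact hV.mp (h g hg hfg)
        · intro hs g hg hfg
          obtain ⟨bc, hbc, hbf, hV, -⟩ := factA g hg hfg
          exact hV.mpr ((hfull1 hBf).mp hs bc hbc hbf)
      · constructor
        · rintro ⟨g, hg, hfg, hw⟩
          obtain ⟨bc, hbc, hbf, -, hF⟩ := factA g hg hfg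
          intro hs
          exact (hF.mp hw) ((hfull1 hBf).mp hs bc hbc hbf)
        · intro hns
          have : ∃ bc ∈ chl, bc.1.FullyInterpreted ∧ ¬ Sat bc.1 bc.2 := by
            by_contra hc
            push_neg at hc
            exact hns ((hfull1 hBf).mpr hc)
          obtain ⟨bc, hbc, hbf, hnsbc⟩ := this
          by_cases ht : reduce (EMC bc.2 bc.1 X) = Game.top
          · exact absurd ((hIH bc hbc).2.1 ht bc.1 (comp_self (hchWF bc hbc) hbf)) hnsbc
          · by_cases hb : reduce (EMC bc.2 bc.1 X) = Game.bot
            · exact absurd (hbotmem.mpr ⟨bc, hbc, hb⟩) hbot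
            · obtain ⟨g, hg, hfg, -, hF⟩ := factB bc hbc hbf ht hb
              exact ⟨g, hg, hfg, hF.mpr hnsbc⟩

end MSOG

namespace MSOG
attribute [local instance] Classical.propDecidable

/-- Main lemma, generic existential (verifier) case. -/
theorem EL {ar : ℕ → ℕ} {φ0 : MSO} {B : Struc} {X : Finset ℕ}
    (hWF : B.WF ar) (hXu : X ⊆ B.univ)
    (hna : ¬ φ0.IsAtomic) (hex : φ0.IsExistential) (hnun : ¬ φ0.IsUniversal)
    (chl : List (Struc × MSO)) (hne : chl ≠ [])
    (hEMC : EMC φ0 B X = .node (B.restrict (X ∪ B.nulValues), X, φ0) (some .verifier)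
      (chl.map fun bc => EMC bc.2 bc.1 X))
    (huniv : ∀ bc ∈ chl, bc.1.univ = B.univ)
    (hchWF : ∀ bc ∈ chl, bc.1.WF ar)
    (hIH : ∀ bc ∈ chl, Concl ar bc.2 bc.1 X)
    (hallE : ∀ C, Comp ar B C →
      (∀ bc ∈ chl, ∀ D, Comp ar bc.1 D → ¬ Sat D bc.2) → ¬ Sat C φ0)
    (htopE : ∀ C, Comp ar B C → B.univ ≠ ∅ → ∀ bc ∈ chl,
      (∀ D, Comp ar bc.1 D → Sat D bc.2) → Sat C φ0)
    (hfullE : B.FullyInterpreted →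
      (Sat B φ0 ↔ ∃ bc ∈ chl, bc.1.FullyInterpreted ∧ Sat bc.1 bc.2)) :
    Concl ar φ0 B X := by
  unfold Concl
  rw [hEMC]
  set subs := chl.map fun bc => EMC bc.2 bc.1 X with hsubs
  have hrw := reduce_node (B.restrict (X ∪ B.nulValues), X, φ0) (some .verifier) subs hna
  have hmaps : subs.map reduce = chl.map fun bc => reduce (EMC bc.2 bc.1 X) := by
    rw [hsubs, List.map_map]; rfl
  have hbotmem : Game.bot ∈ subs.map reduce ↔
      ∃ bc ∈ chl, reduce (EMC bc.2 bc.1 X) = Game.bot := by rw [hmaps, List.mem_map]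
  have htopmem : Game.top ∈ subs.map reduce ↔
      ∃ bc ∈ chl, reduce (EMC bc.2 bc.1 X) = Game.top := by rw [hmaps, List.mem_map]
  have hchOk : ∀ g ∈ subs, PosOk (reduce g) := by
    intro g hg
    rw [hsubs, List.mem_map] at hg
    obtain ⟨bc, hbc, rfl⟩ := hg
    exact (hIH bc hbc).2.2.2.2
  have hXp : X ⊆ (B.restrict (X ∪ B.nulValues)).univ :=
    fun x hx => Finset.mem_inter.mpr ⟨hXu hx, Finset.mem_union_left _ hx⟩
  by_cases htop : Game.top ∈ subs.map reduce
  · -- some subgame reduces to ⊤; the whole game reduces to ⊤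
    have hr : reduce (Game.node (B.restrict (X ∪ B.nulValues), X, φ0) (some .verifier) subs)
        = Game.top := by rw [hrw, if_neg (fun h => hnun h.1), if_pos ⟨hex, htop⟩]
    rw [hr]
    obtain ⟨bc, hbc, hbctop⟩ := htopmem.mp htop
    have hNE : B.univ ≠ ∅ := by
      intro h0
      exact ((hIH bc hbc).1 (by rw [huniv bc hbc]; exact h0)).1 hbctop
    have hsat : ∀ C, Comp ar B C → Sat C φ0 := fun C hC =>
      htopE C hC hNE bc hbc (fun D hD => (hIH bc hbc).2.1 hbctop D hD)
    refine ⟨fun h => absurd h hNE, fun _ => hsat, fun h => (by cases h), ?_, posOk_top⟩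
    intro hBf
    have := hsat B (comp_self hWF hBf)
    constructor
    · simp [this]
    · simp [this]
  · by_cases hk : keptOf subs = []
    · -- all subgames reduce to ⊥
      have hallbot : ∀ bc ∈ chl, reduce (EMC bc.2 bc.1 X) = Game.bot := by
        intro bc hbc
        rcases keptOf_nil hk (by rw [hsubs]; exact List.mem_map_of_mem hbc) with h | h
        · exact absurd (htopmem.mpr ⟨bc, hbc, h⟩) htop
        · exact h
      have hr : reduce (Game.node (B.restrict (X ∪ B.nulValues), X, φ0) (some .verifier) subs)
          = Game.bot := by
        rw [hrw, if_neg (fun h => hnun h.1), if_neg (fun h => htop h.2), if_pos hk,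
          eval_ver_nil]
      rw [hr]
      have hnsat : ∀ C, Comp ar B C → ¬ Sat C φ0 := fun C hC =>
        hallE C hC (fun bc hbc D hD => (hIH bc hbc).2.2.1 (hallbot bc hbc) D hD)
      obtain ⟨bc, hbc⟩ := List.exists_mem_of_ne_nil chl hne
      refine ⟨?_, fun h => (by cases h), fun _ => hnsat, ?_, posOk_bot⟩
      · intro h0
        exact absurd (hallbot bc hbc)
          (((hIH bc hbc).1 (by rw [huniv bc hbc]; exact h0)).2)
      · intro hBf
        have := hnsat B (comp_self hWF hBf)
        constructor
        · simp [this]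
        · simp [this]
    · -- undetermined node
      have hr : reduce (Game.node (B.restrict (X ∪ B.nulValues), X, φ0) (some .verifier) subs)
          = Game.node (B.restrict (X ∪ B.nulValues), X, φ0) (some .verifier) (keptOf subs) := by
        rw [hrw, if_neg (fun h => hnun h.1), if_neg (fun h => htop h.2), if_neg hk]
      rw [hr]
      refine ⟨fun _ => ⟨fun h => (by cases h), fun h => (by cases h)⟩,
        fun h => (by cases h), fun h => (by cases h), ?_, ?_⟩
      swap
      · rw [posOk_node]
        refine ⟨hXp, ?_⟩
        intro g hg
        obtain ⟨h, hh, rfl, -, -⟩ := mem_keptOf hg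
        exact hchOk h hh
      intro hBf
      have factA : ∀ g ∈ keptOf subs, g.IsFullNodeE → ∃ bc ∈ chl, bc.1.FullyInterpreted ∧
          (cWinV g ↔ Sat bc.1 bc.2) ∧ (cWinF g ↔ ¬ Sat bc.1 bc.2) := by
        intro g hg hfg
        obtain ⟨h, hh, hred, hgt, hgb⟩ := mem_keptOf hg
        rw [hsubs, List.mem_map] at hh
        obtain ⟨bc, hbc, rfl⟩ := hh
        rcases reduce_emc_shape bc.2 bc.1 X with hs | hs | ⟨o, s, hs⟩
        · exact absurd (hred ▸ hs) hgt
        · exact absurd (hred ▸ hs) hgb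
        · rw [← hred, hs] at hfg
          rw [isFullNodeE_node] at hfg
          have hbf : bc.1.FullyInterpreted := (restrict_nulValues_full_iff X).mp hfg
          refine ⟨bc, hbc, hbf, ?_⟩
          rw [← hred]
          exact (hIH bc hbc).2.2.2.1 hbf
      have factB : ∀ bc ∈ chl, bc.1.FullyInterpreted →
          reduce (EMC bc.2 bc.1 X) ≠ Game.top → reduce (EMC bc.2 bc.1 X) ≠ Game.bot →
          ∃ g ∈ keptOf subs, g.IsFullNodeE ∧
            (cWinV g ↔ Sat bc.1 bc.2) ∧ (cWinF g ↔ ¬ Sat bc.1 bc.2) := by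
        intro bc hbc hbf hnt hnb
        obtain ⟨g', hg', heq⟩ := keptOf_exists hchOk
          (by rw [hsubs]; exact List.mem_map_of_mem hbc) hnt hnb
        obtain ⟨hf1, hf2, hf3⟩ := inv_lemma _ _ heq
        have hfull : (reduce (EMC bc.2 bc.1 X)).IsFullNodeE := by
          rcases reduce_emc_shape bc.2 bc.1 X with hs | hs | ⟨o, s, hs⟩
          · exact absurd hs hnt
          · exact absurd hs hnb
          · rw [hs, isFullNodeE_node]
            exact (restrict_nulValues_full_iff X).mpr hbf
        have hiff := (hIH bc hbc).2.2.2.1 hbf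
        exact ⟨g', hg', hf1.mp hfull,
          by rw [← hf2]; exact hiff.1, by rw [← hf3]; exact hiff.2⟩
      rw [cWinV_ver, cWinF_ver]
      constructor
      · constructor
        · rintro ⟨g, hg, hfg, hw⟩
          obtain ⟨bc, hbc, hbf, hV, -⟩ := factA g hg hfg
          exact (hfullE hBf).mpr ⟨bc, hbc, hbf, hV.mp hw⟩
        · intro hs
          obtain ⟨bc, hbc, hbf, hsbc⟩ := (hfullE hBf).mp hs
          by_cases ht : reduce (EMC bc.2 bc.1 X) = Game.top
          · exact absurd (htopmem.mpr ⟨bc, hbc, ht⟩) htop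
          · by_cases hb : reduce (EMC bc.2 bc.1 X) = Game.bot
            · have := ((hIH bc hbc).2.2.2.1 hbf).2
              rw [hb] at this
              exact absurd hsbc (this.mp cWinF_bot)
            · obtain ⟨g, hg, hfg, hV, -⟩ := factB bc hbc hbf ht hb
              exact ⟨g, hg, hfg, hV.mpr hsbc⟩
      · constructor
        · intro h hs
          obtain ⟨bc, hbc, hbf, hsbc⟩ := (hfullE hBf).mp hs
          by_cases ht : reduce (EMC bc.2 bc.1 X) = Game.top
          · exact absurd (htopmem.mpr ⟨bc, hbc, ht⟩) htop
          · by_cases hb : reduce (EMC bc.2 bc.1 X) = Game.bot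
            · exact (hIH bc hbc).2.2.1 hb bc.1 (comp_self (hchWF bc hbc) hbf) hsbc
            · obtain ⟨g, hg, hfg, -, hF⟩ := factB bc hbc hbf ht hb
              exact (hF.mp (h g hg hfg)) hsbc
        · intro hns g hg hfg
          obtain ⟨bc, hbc, hbf, -, hF⟩ := factA g hg hfg
          refine hF.mpr ?_
          intro hsbc
          exact hns ((hfullE hBf).mpr ⟨bc, hbc, hbf, hsbc⟩)
      
end MSOG

namespace MSOG
attribute [local instance] Classical.propDecidable

theorem ATOM {ar : ℕ → ℕ} {B : Struc} {X : Finset ℕ} {R : ℕ} {cs : List ℕ}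
    (har : ∀ S ∈ B.voc.rels, 1 ≤ ar S) (hWF : B.WF ar)
    (hwf : MSO.wf ar B.voc (.atom R cs)) (hXu : X ⊆ B.univ) :
    Concl ar (.atom R cs) B X := by
  obtain ⟨hR, hlen, hcs⟩ := (hwf : R ∈ B.voc.rels ∧ cs.length = ar R ∧ ∀ c ∈ cs, c ∈ B.voc.nulls)
  have hXp : X ⊆ (B.restrict (X ∪ B.nulValues)).univ :=
    fun x hx => Finset.mem_inter.mpr ⟨hXu hx, Finset.mem_union_left _ hx⟩
  unfold Concl
  rw [EMC, reduce_atomic _ _ _ isAtomic_atom]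
  by_cases hi : ∀ c ∈ cs, (B.nul c).isSome
  · have hP0 : B.univ ≠ ∅ := by
      intro h0
      have hcsne : cs ≠ [] := by
        intro h
        rw [h, List.length_nil] at hlen
        have := har R hR
        omega
      obtain ⟨c, hc⟩ := List.exists_mem_of_ne_nil cs hcsne
      obtain ⟨x, hx⟩ := Option.isSome_iff_exists.mp (hi c hc)
      have := (hWF.nul_wf c x hx).2
      rw [h0] at this
      exact absurd this (Finset.notMem_empty x)
    by_cases hs : Sat B (.atom R cs)
    · rw [if_pos hi, if_pos hs, eval_fals_nil]
      refine ⟨fun h => absurd h hP0, ?_, fun h => (by cases h), ?_, posOk_top⟩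
      · intro _ C hC
        exact (sat_atom_transfer hC hi).1.mpr hs
      · intro _
        constructor
        · simp [hs]
        · simp [hs]
    · rw [if_pos hi, if_neg hs, eval_ver_nil]
      refine ⟨fun h => absurd h hP0, fun h => (by cases h), ?_, ?_, posOk_bot⟩
      · intro _ C hC hsc
        exact hs ((sat_atom_transfer hC hi).1.mp hsc)
      · intro _
        constructor
        · simp [hs]
        · simp [hs]
  · rw [if_neg hi, eval_none]
    refine ⟨fun _ => ⟨fun h => (by cases h), fun h => (by cases h)⟩,
      fun h => (by cases h), fun h => (by cases h), ?_, ?_⟩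
    · intro hBf
      exact absurd (full_isSome hBf hcs) hi
    · rw [posOk_node]
      exact ⟨hXp, by simp⟩

theorem NATOM {ar : ℕ → ℕ} {B : Struc} {X : Finset ℕ} {R : ℕ} {cs : List ℕ}
    (har : ∀ S ∈ B.voc.rels, 1 ≤ ar S) (hWF : B.WF ar)
    (hwf : MSO.wf ar B.voc (.natom R cs)) (hXu : X ⊆ B.univ) :
    Concl ar (.natom R cs) B X := by
  obtain ⟨hR, hlen, hcs⟩ := (hwf : R ∈ B.voc.rels ∧ cs.length = ar R ∧ ∀ c ∈ cs, c ∈ B.voc.nulls)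
  have hXp : X ⊆ (B.restrict (X ∪ B.nulValues)).univ :=
    fun x hx => Finset.mem_inter.mpr ⟨hXu hx, Finset.mem_union_left _ hx⟩
  unfold Concl
  rw [EMC, reduce_atomic _ _ _ isAtomic_natom]
  by_cases hi : ∀ c ∈ cs, (B.nul c).isSome
  · have hP0 : B.univ ≠ ∅ := by
      intro h0
      have hcsne : cs ≠ [] := by
        intro h
        rw [h, List.length_nil] at hlen
        have := har R hR
        omega
      obtain ⟨c, hc⟩ := List.exists_mem_of_ne_nil cs hcsne
      obtain ⟨x, hx⟩ := Option.isSome_iff_exists.mp (hi c hc)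
      have := (hWF.nul_wf c x hx).2
      rw [h0] at this
      exact absurd this (Finset.notMem_empty x)
    by_cases hs : Sat B (.natom R cs)
    · rw [if_pos hi, if_pos hs, eval_fals_nil]
      refine ⟨fun h => absurd h hP0, ?_, fun h => (by cases h), ?_, posOk_top⟩
      · intro _ C hC
        exact (sat_atom_transfer hC hi).2.mpr hs
      · intro _
        constructor
        · simp [hs]
        · simp [hs]
    · rw [if_pos hi, if_neg hs, eval_ver_nil]
      refine ⟨fun h => absurd h hP0, fun h => (by cases h), ?_, ?_, posOk_bot⟩
      · intro _ C hC hsc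
        exact hs ((sat_atom_transfer hC hi).2.mp hsc)
      · intro _
        constructor
        · simp [hs]
        · simp [hs]
  · rw [if_neg hi, eval_none]
    refine ⟨fun _ => ⟨fun h => (by cases h), fun h => (by cases h)⟩,
      fun h => (by cases h), fun h => (by cases h), ?_, ?_⟩
    · intro hBf
      exact absurd (full_isSome hBf hcs) hi
    · rw [posOk_node]
      exact ⟨hXp, by simp⟩

end MSOG

namespace MSOG
attribute [local instance] Classical.propDecidable

theorem mainS (ar : ℕ → ℕ) (φ : MSO) : ∀ (B : Struc) (X : Finset ℕ),
    (∀ S ∈ B.voc.rels, 1 ≤ ar S) → B.WF ar → MSO.wf ar B.voc φ → X ⊆ B.univ →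
    Concl ar φ B X := by
  induction φ with
  | atom R cs => exact fun B X har hWF hwf hX => ATOM har hWF hwf hX
  | natom R cs => exact fun B X har hWF hwf hX => NATOM har hWF hwf hX
  | conj φ1 φ2 ih1 ih2 =>
    intro B X har hWF hwf hX
    obtain ⟨hwf1, hwf2⟩ := (hwf : MSO.wf ar B.voc φ1 ∧ MSO.wf ar B.voc φ2)
    have hmem : ∀ bc ∈ [(B, φ1), (B, φ2)], bc = (B, φ1) ∨ bc = (B, φ2) := by
      intro bc hbc
      simpa using hbc
    refine UL hWF hX not_isAtomic_conj isUniversal_conj not_isExistential_conj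
      [(B, φ1), (B, φ2)] (by simp) (by rw [EMC]; rfl) ?_ ?_ ?_ ?_ ?_ ?_
    · intro bc hbc; rcases hmem bc hbc with rfl | rfl <;> rfl
    · intro bc hbc; rcases hmem bc hbc with rfl | rfl <;> exact hWF
    · intro bc hbc
      rcases hmem bc hbc with rfl | rfl
      · exact ih1 B X har hWF hwf1 hX
      · exact ih2 B X har hWF hwf2 hX
    · intro C hC hall
      exact ⟨hall (B, φ1) (by simp) C hC, hall (B, φ2) (by simp) C hC⟩
    · intro C hC _ bc hbc hn hsc
      have hsc' : Sat C φ1 ∧ Sat C φ2 := hsc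
      rcases hmem bc hbc with rfl | rfl
      · exact hn C hC hsc'.1
      · exact hn C hC hsc'.2
    · intro hBf
      constructor
      · intro hs bc hbc _
        have hs' : Sat B φ1 ∧ Sat B φ2 := hs
        rcases hmem bc hbc with rfl | rfl
        · exact hs'.1
        · exact hs'.2
      · intro h
        exact ⟨h (B, φ1) (by simp) hBf, h (B, φ2) (by simp) hBf⟩
  | disj φ1 φ2 ih1 ih2 =>
    intro B X har hWF hwf hX
    obtain ⟨hwf1, hwf2⟩ := (hwf : MSO.wf ar B.voc φ1 ∧ MSO.wf ar B.voc φ2)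
    have hmem : ∀ bc ∈ [(B, φ1), (B, φ2)], bc = (B, φ1) ∨ bc = (B, φ2) := by
      intro bc hbc
      simpa using hbc
    refine EL hWF hX not_isAtomic_disj isExistential_disj not_isUniversal_disj
      [(B, φ1), (B, φ2)] (by simp) (by rw [EMC]; rfl) ?_ ?_ ?_ ?_ ?_ ?_
    · intro bc hbc; rcases hmem bc hbc with rfl | rfl <;> rfl
    · intro bc hbc; rcases hmem bc hbc with rfl | rfl <;> exact hWF
    · intro bc hbc
      rcases hmem bc hbc with rfl | rfl
      · exact ih1 B X har hWF hwf1 hX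
      · exact ih2 B X har hWF hwf2 hX
    · intro C hC hn hsc
      have hsc' : Sat C φ1 ∨ Sat C φ2 := hsc
      rcases hsc' with h | h
      · exact hn (B, φ1) (by simp) C hC h
      · exact hn (B, φ2) (by simp) C hC h
    · intro C hC _ bc hbc hall
      rcases hmem bc hbc with rfl | rfl
      · exact Or.inl (hall C hC)
      · exact Or.inr (hall C hC)
    · intro hBf
      constructor
      · intro hs
        rcases (hs : Sat B φ1 ∨ Sat B φ2) with h | h
        · exact ⟨(B, φ1), by simp, hBf, h⟩
        · exact ⟨(B, φ2), by simp, hBf, h⟩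
      · rintro ⟨bc, hbc, -, hsbc⟩
        rcases hmem bc hbc with rfl | rfl
        · exact Or.inl hsbc
        · exact Or.inr hsbc
  | fall c φ ih =>
    intro B X har hWF hwf hX
    obtain ⟨hc, hwf'⟩ := (hwf : c ∉ B.voc.nulls ∧ MSO.wf ar (B.voc.addNul c) φ)
    set chl := (none :: B.univ.toList.map some).map fun u => (B.addNul c u, φ) with hchl
    have hmem : ∀ bc ∈ chl,
        bc = (B.addNul c none, φ) ∨ ∃ a ∈ B.univ, bc = (B.addNul c (some a), φ) := by
      intro bc hbc
      rw [hchl, List.mem_map] at hbc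
      obtain ⟨u, hu, rfl⟩ := hbc
      rcases List.mem_cons.mp hu with rfl | hu
      · exact Or.inl rfl
      · rw [List.mem_map] at hu
        obtain ⟨a, ha, rfl⟩ := hu
        exact Or.inr ⟨a, Finset.mem_toList.mp ha, rfl⟩
    have hmem1 : (B.addNul c none, φ) ∈ chl := List.mem_map_of_mem (List.mem_cons_self)
    have hmem2 : ∀ a ∈ B.univ, (B.addNul c (some a), φ) ∈ chl := fun a ha =>
      List.mem_map_of_mem (List.mem_cons_of_mem _
        (List.mem_map_of_mem (Finset.mem_toList.mpr ha)))
    have hWFn : ∀ u, (∀ a, u = some a → a ∈ B.univ) → (B.addNul c u).WF ar :=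
      fun u hu => hWF.addNul hu
    refine UL hWF hX not_isAtomic_fall isUniversal_fall not_isExistential_fall
      chl (List.ne_nil_of_mem hmem1) (by rw [EMC, hchl, List.map_map]; rfl) ?_ ?_ ?_ ?_ ?_ ?_
    · intro bc hbc
      rcases hmem bc hbc with rfl | ⟨a, ha, rfl⟩ <;> rfl
    · intro bc hbc
      rcases hmem bc hbc with rfl | ⟨a, ha, rfl⟩
      · exact hWFn none (fun a h => nomatch h)
      · exact hWFn (some a) (fun b hb => (Option.some_injective _ hb) ▸ ha)
    · intro bc hbc
      rcases hmem bc hbc with rfl | ⟨a, ha, rfl⟩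
      · exact ih (B.addNul c none) X har (hWFn none (fun a h => nomatch h)) hwf' hX
      · exact ih (B.addNul c (some a)) X har
          (hWFn (some a) (fun b hb => (Option.some_injective _ hb) ▸ ha)) hwf' hX
    · intro C hC hall
      show ∀ a ∈ C.univ, Sat (C.addNul c (some a)) φ
      intro a ha
      have ha' : a ∈ B.univ := by rw [← hC.2.1]; exact ha
      exact hall _ (hmem2 a ha') _ (comp_addNul hC ha' (Or.inr rfl))
    · intro C hC hNE bc hbc hn hsc
      have hsc' : ∀ a ∈ C.univ, Sat (C.addNul c (some a)) φ := hsc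
      rcases hmem bc hbc with rfl | ⟨a, ha, rfl⟩
      · obtain ⟨a, ha⟩ := Finset.nonempty_of_ne_empty hNE
        exact hn _ (comp_addNul hC ha (Or.inl rfl)) (hsc' a (by rw [hC.2.1]; exact ha))
      · exact hn _ (comp_addNul hC ha (Or.inr rfl)) (hsc' a (by rw [hC.2.1]; exact ha))
    · intro hBf
      constructor
      · intro hs bc hbc hbf
        rcases hmem bc hbc with rfl | ⟨a, ha, rfl⟩
        · exact absurd hbf not_full_addNul_none
        · exact (hs : ∀ a ∈ B.univ, Sat (B.addNul c (some a)) φ) a ha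
      · intro h
        show ∀ a ∈ B.univ, Sat (B.addNul c (some a)) φ
        intro a ha
        exact h _ (hmem2 a ha) (full_addNul_some hBf)
  | fex c φ ih =>
    intro B X har hWF hwf hX
    obtain ⟨hc, hwf'⟩ := (hwf : c ∉ B.voc.nulls ∧ MSO.wf ar (B.voc.addNul c) φ)
    set chl := (none :: B.univ.toList.map some).map fun u => (B.addNul c u, φ) with hchl
    have hmem : ∀ bc ∈ chl,
        bc = (B.addNul c none, φ) ∨ ∃ a ∈ B.univ, bc = (B.addNul c (some a), φ) := by
      intro bc hbc
      rw [hchl, List.mem_map] at hbc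
      obtain ⟨u, hu, rfl⟩ := hbc
      rcases List.mem_cons.mp hu with rfl | hu
      · exact Or.inl rfl
      · rw [List.mem_map] at hu
        obtain ⟨a, ha, rfl⟩ := hu
        exact Or.inr ⟨a, Finset.mem_toList.mp ha, rfl⟩
    have hmem1 : (B.addNul c none, φ) ∈ chl := List.mem_map_of_mem (List.mem_cons_self)
    have hmem2 : ∀ a ∈ B.univ, (B.addNul c (some a), φ) ∈ chl := fun a ha =>
      List.mem_map_of_mem (List.mem_cons_of_mem _
        (List.mem_map_of_mem (Finset.mem_toList.mpr ha)))
    have hWFn : ∀ u, (∀ a, u = some a → a ∈ B.univ) → (B.addNul c u).WF ar :=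
      fun u hu => hWF.addNul hu
    refine EL hWF hX not_isAtomic_fex isExistential_fex not_isUniversal_fex
      chl (List.ne_nil_of_mem hmem1) (by rw [EMC, hchl, List.map_map]; rfl) ?_ ?_ ?_ ?_ ?_ ?_
    · intro bc hbc
      rcases hmem bc hbc with rfl | ⟨a, ha, rfl⟩ <;> rfl
    · intro bc hbc
      rcases hmem bc hbc with rfl | ⟨a, ha, rfl⟩
      · exact hWFn none (fun a h => nomatch h)
      · exact hWFn (some a) (fun b hb => (Option.some_injective _ hb) ▸ ha)
    · intro bc hbc
      rcases hmem bc hbc with rfl | ⟨a, ha, rfl⟩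
      · exact ih (B.addNul c none) X har (hWFn none (fun a h => nomatch h)) hwf' hX
      · exact ih (B.addNul c (some a)) X har
          (hWFn (some a) (fun b hb => (Option.some_injective _ hb) ▸ ha)) hwf' hX
    · intro C hC hn hsc
      obtain ⟨a, ha, hsa⟩ := (hsc : ∃ a ∈ C.univ, Sat (C.addNul c (some a)) φ)
      have ha' : a ∈ B.univ := by rw [← hC.2.1]; exact ha
      exact hn _ (hmem2 a ha') _ (comp_addNul hC ha' (Or.inr rfl)) hsa
    · intro C hC hNE bc hbc hall
      show ∃ a ∈ C.univ, Sat (C.addNul c (some a)) φ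
      rcases hmem bc hbc with rfl | ⟨a, ha, rfl⟩
      · obtain ⟨a, ha⟩ := Finset.nonempty_of_ne_empty hNE
        exact ⟨a, by rw [hC.2.1]; exact ha, hall _ (comp_addNul hC ha (Or.inl rfl))⟩
      · exact ⟨a, by rw [hC.2.1]; exact ha, hall _ (comp_addNul hC ha (Or.inr rfl))⟩
    · intro hBf
      constructor
      · intro hs
        obtain ⟨a, ha, hsa⟩ := (hs : ∃ a ∈ B.univ, Sat (B.addNul c (some a)) φ)
        exact ⟨_, hmem2 a ha, full_addNul_some hBf, hsa⟩
      · rintro ⟨bc, hbc, hbf, hsbc⟩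
        rcases hmem bc hbc with rfl | ⟨a, ha, rfl⟩
        · exact absurd hbf not_full_addNul_none
        · exact ⟨a, ha, hsbc⟩
  | sall R φ ih =>
    intro B X har hWF hwf hX
    obtain ⟨hR, har1, hwf'⟩ :=
      (hwf : R ∉ B.voc.rels ∧ ar R = 1 ∧ MSO.wf ar (B.voc.addRel R) φ)
    set chl := B.univ.powerset.toList.map fun U => (B.addRel R U, φ) with hchl
    have hmem : ∀ bc ∈ chl, ∃ U, U ⊆ B.univ ∧ bc = (B.addRel R U, φ) := by
      intro bc hbc
      rw [hchl, List.mem_map] at hbc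
      obtain ⟨U, hU, rfl⟩ := hbc
      exact ⟨U, Finset.mem_powerset.mp (Finset.mem_toList.mp hU), rfl⟩
    have hmem2 : ∀ U ⊆ B.univ, (B.addRel R U, φ) ∈ chl := fun U hU =>
      List.mem_map_of_mem (Finset.mem_toList.mpr (Finset.mem_powerset.mpr hU))
    have har' : ∀ U, ∀ S ∈ (B.addRel R U).voc.rels, 1 ≤ ar S := by
      intro U S hS
      rcases Finset.mem_insert.mp hS with rfl | hS
      · rw [har1]
      · exact har S hS
    refine UL hWF hX not_isAtomic_sall isUniversal_sall not_isExistential_sall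
      chl (List.ne_nil_of_mem (hmem2 ∅ (Finset.empty_subset _)))
      (by rw [EMC, hchl, List.map_map]; rfl) ?_ ?_ ?_ ?_ ?_ ?_
    · intro bc hbc
      obtain ⟨U, hU, rfl⟩ := hmem bc hbc
      rfl
    · intro bc hbc
      obtain ⟨U, hU, rfl⟩ := hmem bc hbc
      exact hWF.addRel hU har1
    · intro bc hbc
      obtain ⟨U, hU, rfl⟩ := hmem bc hbc
      exact ih (B.addRel R U) X (har' U) (hWF.addRel hU har1) hwf' hX
    · intro C hC hall
      show ∀ U ⊆ C.univ, Sat (C.addRel R U) φ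
      intro U hU
      have hU' : U ⊆ B.univ := by rw [← hC.2.1]; exact hU
      exact hall _ (hmem2 U hU') _ (comp_addRel hC hU' har1)
    · intro C hC _ bc hbc hn hsc
      have hsc' : ∀ U ⊆ C.univ, Sat (C.addRel R U) φ := hsc
      obtain ⟨U, hU, rfl⟩ := hmem bc hbc
      exact hn _ (comp_addRel hC hU har1) (hsc' U (by rw [hC.2.1]; exact hU))
    · intro hBf
      constructor
      · intro hs bc hbc _
        obtain ⟨U, hU, rfl⟩ := hmem bc hbc
        exact (hs : ∀ U ⊆ B.univ, Sat (B.addRel R U) φ) U hU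
      · intro h
        show ∀ U ⊆ B.univ, Sat (B.addRel R U) φ
        intro U hU
        exact h _ (hmem2 U hU) (full_addRel hBf)
  | sex R φ ih =>
    intro B X har hWF hwf hX
    obtain ⟨hR, har1, hwf'⟩ :=
      (hwf : R ∉ B.voc.rels ∧ ar R = 1 ∧ MSO.wf ar (B.voc.addRel R) φ)
    set chl := B.univ.powerset.toList.map fun U => (B.addRel R U, φ) with hchl
    have hmem : ∀ bc ∈ chl, ∃ U, U ⊆ B.univ ∧ bc = (B.addRel R U, φ) := by
      intro bc hbc
      rw [hchl, List.mem_map] at hbc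
      obtain ⟨U, hU, rfl⟩ := hbc
      exact ⟨U, Finset.mem_powerset.mp (Finset.mem_toList.mp hU), rfl⟩
    have hmem2 : ∀ U ⊆ B.univ, (B.addRel R U, φ) ∈ chl := fun U hU =>
      List.mem_map_of_mem (Finset.mem_toList.mpr (Finset.mem_powerset.mpr hU))
    have har' : ∀ U, ∀ S ∈ (B.addRel R U).voc.rels, 1 ≤ ar S := by
      intro U S hS
      rcases Finset.mem_insert.mp hS with rfl | hS
      · rw [har1]
      · exact har S hS
    refine EL hWF hX not_isAtomic_sex isExistential_sex not_isUniversal_sex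
      chl (List.ne_nil_of_mem (hmem2 ∅ (Finset.empty_subset _)))
      (by rw [EMC, hchl, List.map_map]; rfl) ?_ ?_ ?_ ?_ ?_ ?_
    · intro bc hbc
      obtain ⟨U, hU, rfl⟩ := hmem bc hbc
      rfl
    · intro bc hbc
      obtain ⟨U, hU, rfl⟩ := hmem bc hbc
      exact hWF.addRel hU har1
    · intro bc hbc
      obtain ⟨U, hU, rfl⟩ := hmem bc hbc
      exact ih (B.addRel R U) X (har' U) (hWF.addRel hU har1) hwf' hX
    · intro C hC hn hsc
      obtain ⟨U, hU, hsU⟩ := (hsc : ∃ U ⊆ C.univ, Sat (C.addRel R U) φ)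
      have hU' : U ⊆ B.univ := by rw [← hC.2.1]; exact hU
      exact hn _ (hmem2 U hU') _ (comp_addRel hC hU' har1) hsU
    · intro C hC _ bc hbc hall
      obtain ⟨U, hU, rfl⟩ := hmem bc hbc
      exact ⟨U, by rw [hC.2.1]; exact hU, hall _ (comp_addRel hC hU har1)⟩
    · intro hBf
      constructor
      · intro hs
        obtain ⟨U, hU, hsU⟩ := (hs : ∃ U ⊆ B.univ, Sat (B.addRel R U) φ)
        exact ⟨_, hmem2 U hU, full_addRel hBf, hsU⟩
      · rintro ⟨bc, hbc, -, hsbc⟩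
        obtain ⟨U, hU, rfl⟩ := hmem bc hbc
        exact ⟨U, hU, hsbc⟩

end MSOG

namespace MSOG
attribute [local instance] Classical.propDecidable

theorem statement_13' (ar : ℕ → ℕ) (τ : Vocab) (A : Struc) (X : Finset ℕ)
    (φ : MSO) (G : Game EPos)
    (harity : ∀ R ∈ τ.rels, 1 ≤ ar R)
    (hA : A.WF ar) (hvoc : A.voc = τ) (hfull : A.FullyInterpreted)
    (hX : X ⊆ A.univ) (hφ : MSO.wf ar τ φ)
    (hG : GEquivE G (reduce (EMC φ A X))) :
    Game.eval (MC φ A) = Game.eval (convert G) := by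
  have hmain := mainS ar φ A X (by rw [hvoc]; exact harity) hA (by rw [hvoc]; exact hφ) hX
  have h3 := hmain.2.2.2.1 hfull
  obtain ⟨-, hf2, hf3⟩ := inv_lemma G (reduce (EMC φ A X)) hG
  have hmc := win_MC φ A
  by_cases hs : Sat A φ
  · have e1 : (MC φ A).eval = .top := (evalSpec _).1.mpr (hmc.1.mpr hs)
    have e2 : (convert G).eval = .top := (evalSpec _).1.mpr (hf2.mpr (h3.1.mpr hs))
    rw [e1, e2]
  · have e1 : (MC φ A).eval = .bot := (evalSpec _).2.mpr (hmc.2.mpr hs)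
    have e2 : (convert G).eval = .bot := (evalSpec _).2.mpr (hf3.mpr (h3.2.mpr hs))
    rw [e1, e2]

end MSOG


namespace MSOG

attribute [local instance] Classical.propDecidable

/-- for fully interpreted `𝔄` and `𝒢 ≅ reduce(EMC(𝔄, X, φ))`,
`eval(MC(𝔄, φ)) = eval(convert(𝒢))`. -/
theorem statement_13 (ar : ℕ → ℕ) (τ : Vocab) (A : Struc) (X : Finset ℕ)
    (φ : MSO) (G : Game EPos)
    (harity : ∀ R ∈ τ.rels, 1 ≤ ar R)
    (hA : A.WF ar) (hvoc : A.voc = τ) (hfull : A.FullyInterpreted)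
    (hX : X ⊆ A.univ) (hφ : MSO.wf ar τ φ)
    (hG : GEquivE G (reduce (EMC φ A X))) :
    Game.eval (MC φ A) = Game.eval (convert G) := by
  exact statement_13' ar τ A X φ G harity hA hvoc hfull hX hφ hG


end MSOG
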